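/- arXiv:2605.09930 — 11 statements merged into one kernel-verified Lean document; each statement's English description precedes it below -/
import Mathlib

section
/- Consider two agents and six items o_1,...,o_6 whose conflict graph is the 6-cycle with edges {o_1,o_2}, {o_2,o_3}, {o_3,o_4}, {o_4,o_5}, {o_5,o_6}, {o_6,o_1}, and where both agents have the same additive valuation v with v(o_1) = v(o_3) = v(o_5) = 1 and v(o_2) = v(o_4) = v(o_6) = 2. Then no allocation (A_1, A_2) is both EF1 and Pareto optimal. -/
/-- 6-cycle adjacency on items o_1,...,o_6 (indexed 0,...,5). -/
def cAdj2 (i j : Fin 6) : Prop := (i.val + 1) % 6 = j.val ∨ (j.val + 1) % 6 = i.val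

/-- The identical additive valuation with values 1, 2, 1, 2, 1, 2. -/
noncomputable def v2 (S : Finset (Fin 6)) : ℝ := ∑ o ∈ S, (![1, 2, 1, 2, 1, 2] : Fin 6 → ℝ) o

/-- Feasible allocation for two agents: disjoint bundles, each independent in the cycle. -/
def isAlloc2 (A : Fin 2 → Finset (Fin 6)) : Prop :=
  (∀ i j : Fin 2, i ≠ j → Disjoint (A i) (A j)) ∧
  (∀ i : Fin 2, ∀ x ∈ A i, ∀ y ∈ A i, ¬ cAdj2 x y)

instance (i j : Fin 6) : Decidable (cAdj2 i j) := by unfold cAdj2; infer_instance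

def wN (S : Finset (Fin 6)) : ℕ := ∑ o ∈ S, (![1, 2, 1, 2, 1, 2] : Fin 6 → ℕ) o

lemma v2_eq (S : Finset (Fin 6)) : v2 S = (wN S : ℝ) := by
  unfold v2 wN
  push_cast
  refine Finset.sum_congr rfl fun x _ => ?_
  fin_cases x <;> norm_num

def indepN (S : Finset (Fin 6)) : Prop := ∀ x ∈ S, ∀ y ∈ S, ¬ cAdj2 x y

instance : DecidablePred indepN := fun S => by unfold indepN; infer_instance

set_option maxRecDepth 10000 in
lemma L1 : ∀ S : Finset (Fin 6), indepN S → wN S ≤ 6 := by decide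

set_option maxRecDepth 40000 in
lemma L2 : ∀ S T : Finset (Fin 6), indepN S → indepN T → S ∩ T = ∅ →
    4 ≤ wN S → wN T ≤ 3 := by decide

set_option maxRecDepth 40000 in
lemma L3 : ∀ T U : Finset (Fin 6), wN T = 6 → U.card ≤ 1 → 4 ≤ wN (T \ U) := by decide

lemma wN_mono {S T : Finset (Fin 6)} (h : S ⊆ T) : wN S ≤ wN T :=
  Finset.sum_le_sum_of_subset h

/-- no allocation is both EF1 and Pareto optimal. -/
theorem stmt_2 :
    ¬ ∃ A : Fin 2 → Finset (Fin 6),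
      isAlloc2 A ∧
      (∀ i j : Fin 2, ∃ S : Finset (Fin 6), S ⊆ A i ∪ A j ∧ S.card ≤ 1 ∧
        v2 (A i \ S) ≥ v2 (A j \ S)) ∧
      (¬ ∃ A' : Fin 2 → Finset (Fin 6), isAlloc2 A' ∧
        (∀ i : Fin 2, v2 (A' i) ≥ v2 (A i)) ∧ (∃ i : Fin 2, v2 (A' i) > v2 (A i))) := by
  rintro ⟨A, ⟨hdisj, hind⟩, hEF1, hPO⟩
  set a := wN (A 0) with ha_def
  set b := wN (A 1) with hb_def
  have ha6 : a ≤ 6 := L1 _ (hind 0)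
  have hb6 : b ≤ 6 := L1 _ (hind 1)
  -- EF1 contradiction when profile is (6,3) i.e. wN (A i) = 6, wN (A j) = 3
  have hEFc : ∀ i j : Fin 2, wN (A i) = 6 → wN (A j) = 3 → False := by
    intro i j hi hj
    obtain ⟨S, _, hcard, hge⟩ := hEF1 j i
    rw [v2_eq, v2_eq, ge_iff_le, Nat.cast_le] at hge
    have h1 : 4 ≤ wN (A i \ S) := L3 _ _ hi hcard
    have h2 : wN (A j \ S) ≤ 3 := hj ▸ wN_mono (Finset.sdiff_subset)
    omega
  -- dominance consequences
  have key : ∀ B : Fin 2 → Finset (Fin 6), isAlloc2 B →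
      ¬ ((∀ i : Fin 2, wN (A i) ≤ wN (B i)) ∧ (∃ i : Fin 2, wN (A i) < wN (B i))) := by
    intro B hB h
    exact hPO ⟨B, hB, fun i => by rw [v2_eq, v2_eq]; exact_mod_cast (h.1 i),
      h.2.imp fun i hi => by rw [v2_eq, v2_eq]; exact_mod_cast hi⟩
  have hB1 : isAlloc2 (![({1,3,5} : Finset (Fin 6)), ({0,2,4} : Finset (Fin 6))]) := by
    constructor
    · decide
    · decide
  have hB2 : isAlloc2 (![({0,2,4} : Finset (Fin 6)), ({1,3,5} : Finset (Fin 6))]) := by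
    constructor
    · decide
    · decide
  have w135 : wN ({1,3,5} : Finset (Fin 6)) = 6 := by decide
  have w024 : wN ({0,2,4} : Finset (Fin 6)) = 3 := by decide
  have k1 := key _ hB1
  have k2 := key _ hB2
  push_neg at k1 k2
  -- turn into arithmetic facts
  have c1 : (a = 6 ∧ b = 3) ∨ 4 ≤ b := by
    by_cases hb : b ≤ 3
    · left
      have h1 : ∀ i : Fin 2, wN (A i) ≤ wN (![({1,3,5} : Finset (Fin 6)), {0,2,4}] i) := by
        intro i; fin_cases i <;> simp [w135, w024, ← ha_def, ← hb_def] <;> omega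
      have h2 := k1 h1
      have h20 := h2 0
      have h21 := h2 1
      simp [w135, w024, ← ha_def, ← hb_def] at h20 h21
      omega
    · right; omega
  have c2 : (b = 6 ∧ a = 3) ∨ 4 ≤ a := by
    by_cases haa : a ≤ 3
    · left
      have h1 : ∀ i : Fin 2, wN (A i) ≤ wN (![({0,2,4} : Finset (Fin 6)), {1,3,5}] i) := by
        intro i; fin_cases i <;> simp [w135, w024, ← ha_def, ← hb_def] <;> omega
      have h2 := k2 h1
      have h20 := h2 0
      have h21 := h2 1
      simp [w135, w024, ← ha_def, ← hb_def] at h20 h21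
      omega
    · right; omega
  rcases c1 with ⟨ha', hb'⟩ | hb4
  · exact hEFc 0 1 ha' hb'
  rcases c2 with ⟨hb', ha'⟩ | ha4
  · exact hEFc 1 0 hb' ha'
  · have := L2 (A 0) (A 1) (hind 0) (hind 1) (Finset.disjoint_iff_inter_eq_empty.mp (hdisj 0 1 (by decide))) ha4
    omega
end

section
/- Consider two agents and four items o_1, o_2, o_3, o_4 whose conflict graph is the path with edges {o_1,o_2}, {o_2,o_3}, {o_3,o_4}, and where both agents have the same additive valuation v with v(o_1) = v(o_3) = 1 and v(o_2) = v(o_4) = 3. Then no allocation (A_1, A_2) is both complete and EF1. -/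
/-- Path graph adjacency on four items o_1,...,o_4 (indexed 0,...,3). -/
def pAdj4 (i j : Fin 4) : Prop := i.val + 1 = j.val ∨ j.val + 1 = i.val

/-- The identical additive valuation with values 1, 3, 1, 3. -/
noncomputable def v4 (S : Finset (Fin 4)) : ℝ := ∑ o ∈ S, (![1, 3, 1, 3] : Fin 4 → ℝ) o

lemma v4_eq (S : Finset (Fin 4)) :
    v4 S = ((∑ o ∈ S, (![1, 3, 1, 3] : Fin 4 → ℕ) o : ℕ) : ℝ) := by
  unfold v4
  push_cast
  apply Finset.sum_congr rfl
  intro o _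
  fin_cases o <;> simp

set_option maxRecDepth 10000 in
lemma key : ¬ ∃ A : Fin 2 → Finset (Fin 4),
      (∀ i j : Fin 2, i ≠ j → Disjoint (A i) (A j)) ∧
      (∀ i : Fin 2, ∀ x ∈ A i, ∀ y ∈ A i, ¬ (x.val + 1 = y.val ∨ y.val + 1 = x.val)) ∧
      (∀ o : Fin 4, ∃ i : Fin 2, o ∈ A i) ∧
      (∀ i j : Fin 2, ∃ S : Finset (Fin 4), S ⊆ A i ∪ A j ∧ S.card ≤ 1 ∧
        (∑ o ∈ A j \ S, (![1, 3, 1, 3] : Fin 4 → ℕ) o) ≤ ∑ o ∈ A i \ S, (![1, 3, 1, 3] : Fin 4 → ℕ) o) := by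
  decide

/-- no allocation is both complete and EF1. -/
theorem stmt_4 :
    ¬ ∃ A : Fin 2 → Finset (Fin 4),
      (∀ i j : Fin 2, i ≠ j → Disjoint (A i) (A j)) ∧
      (∀ i : Fin 2, ∀ x ∈ A i, ∀ y ∈ A i, ¬ pAdj4 x y) ∧
      (∀ o : Fin 4, ∃ i : Fin 2, o ∈ A i) ∧
      (∀ i j : Fin 2, ∃ S : Finset (Fin 4), S ⊆ A i ∪ A j ∧ S.card ≤ 1 ∧
        v4 (A i \ S) ≥ v4 (A j \ S)) := by
  rintro ⟨A, h1, h2, h3, h4⟩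
  exact key ⟨A, h1, h2, h3, fun i j => by
    obtain ⟨S, hs1, hs2, hs3⟩ := h4 i j
    refine ⟨S, hs1, hs2, ?_⟩
    rw [v4_eq, v4_eq] at hs3
    exact_mod_cast hs3⟩
end

section
/- Let G be any finite conflict graph, and let v and v' be any (not necessarily monotone) valuations on sets of items. If (A_1, A_2) is an allocation for two agents that is maximal and EF1 when both agents have valuation v, then either (A_1, A_2) or the reversed allocation (A_2, A_1) is maximal and EF1 when the first agent has valuation v and the second agent has valuation v'. -/
/-- cut-and-choose style lemma: if (A₁, A₂) is maximal and EF1 when both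
agents have valuation v, then either (A₁, A₂) or (A₂, A₁) is maximal and EF1 when the
first agent has valuation v and the second has valuation v'. -/
theorem stmt_7 {α : Type*} [Fintype α] [DecidableEq α] (G : SimpleGraph α)
    (v v' : Finset α → ℝ) (hv : v ∅ = 0) (hv' : v' ∅ = 0)
    (A₁ A₂ : Finset α)
    (hdisj : Disjoint A₁ A₂)
    (hind1 : ∀ x ∈ A₁, ∀ y ∈ A₁, ¬ G.Adj x y)
    (hind2 : ∀ x ∈ A₂, ∀ y ∈ A₂, ¬ G.Adj x y)
    (hmax : ∀ o : α, o ∉ A₁ → o ∉ A₂ → (∃ x ∈ A₁, G.Adj o x) ∧ (∃ x ∈ A₂, G.Adj o x))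
    (hEF1 : (∃ S ⊆ A₁ ∪ A₂, S.card ≤ 1 ∧ v (A₁ \ S) ≥ v (A₂ \ S)) ∧
            (∃ S ⊆ A₂ ∪ A₁, S.card ≤ 1 ∧ v (A₂ \ S) ≥ v (A₁ \ S))) :
    ((∀ o : α, o ∉ A₁ → o ∉ A₂ → (∃ x ∈ A₁, G.Adj o x) ∧ (∃ x ∈ A₂, G.Adj o x)) ∧
      (∃ S ⊆ A₁ ∪ A₂, S.card ≤ 1 ∧ v (A₁ \ S) ≥ v (A₂ \ S)) ∧
      (∃ S ⊆ A₂ ∪ A₁, S.card ≤ 1 ∧ v' (A₂ \ S) ≥ v' (A₁ \ S))) ∨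
    ((∀ o : α, o ∉ A₂ → o ∉ A₁ → (∃ x ∈ A₂, G.Adj o x) ∧ (∃ x ∈ A₁, G.Adj o x)) ∧
      (∃ S ⊆ A₂ ∪ A₁, S.card ≤ 1 ∧ v (A₂ \ S) ≥ v (A₁ \ S)) ∧
      (∃ S ⊆ A₁ ∪ A₂, S.card ≤ 1 ∧ v' (A₁ \ S) ≥ v' (A₂ \ S))) := by
  by_cases h : ∃ S ⊆ A₂ ∪ A₁, S.card ≤ 1 ∧ v' (A₂ \ S) ≥ v' (A₁ \ S)
  · exact Or.inl ⟨hmax, hEF1.1, h⟩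
  · refine Or.inr ⟨fun o h2 h1 => (hmax o h1 h2).symm, hEF1.2,
      ⟨∅, Finset.empty_subset _, by simp, ?_⟩⟩
    push_neg at h
    have := h ∅ (Finset.empty_subset _) (by simp)
    simpa using this.le
end

section
/- Let v be a monotone non-decreasing valuation (with v(∅) = 0) shared by two agents, and let (A, A') with A = (A_1, A_2) and A' = (A'_1, A'_2) be an order-adjacent pair of allocations, i.e., |A_1 \ A'_1| ≤ 1 and |A'_2 \ A_2| ≤ 1. If v(A_1) ≥ v(A_2) and v(A'_2) ≥ v(A'_1), then at least one of the allocations A and A' is EF1 (with both agents having valuation v). -/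
/-- if (A, A') is an order-adjacent pair of allocations, v(A₁) ≥ v(A₂), and
v(A'₂) ≥ v(A'₁), then at least one of the two allocations is EF1 (both agents sharing the
monotone non-decreasing valuation v). -/
theorem stmt_8 {α : Type*} [Fintype α] [DecidableEq α] (G : SimpleGraph α)
    (v : Finset α → ℝ) (hzero : v ∅ = 0)
    (hmono : ∀ S T : Finset α, S ⊆ T → v S ≤ v T)
    (A₁ A₂ A₁' A₂' : Finset α)
    (hA : Disjoint A₁ A₂) (hA' : Disjoint A₁' A₂')
    (hind1 : ∀ x ∈ A₁, ∀ y ∈ A₁, ¬ G.Adj x y)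
    (hind2 : ∀ x ∈ A₂, ∀ y ∈ A₂, ¬ G.Adj x y)
    (hind1' : ∀ x ∈ A₁', ∀ y ∈ A₁', ¬ G.Adj x y)
    (hind2' : ∀ x ∈ A₂', ∀ y ∈ A₂', ¬ G.Adj x y)
    (hoa1 : (A₁ \ A₁').card ≤ 1) (hoa2 : (A₂' \ A₂).card ≤ 1)
    (h1 : v A₁ ≥ v A₂) (h2 : v A₂' ≥ v A₁') :
    ((∃ S ⊆ A₁ ∪ A₂, S.card ≤ 1 ∧ v (A₁ \ S) ≥ v (A₂ \ S)) ∧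
     (∃ S ⊆ A₂ ∪ A₁, S.card ≤ 1 ∧ v (A₂ \ S) ≥ v (A₁ \ S))) ∨
    ((∃ S ⊆ A₁' ∪ A₂', S.card ≤ 1 ∧ v (A₁' \ S) ≥ v (A₂' \ S)) ∧
     (∃ S ⊆ A₂' ∪ A₁', S.card ≤ 1 ∧ v (A₂' \ S) ≥ v (A₁' \ S))) := by
  by_cases h : v A₂ ≥ v (A₁ \ (A₁ \ A₁'))
  · left
    constructor
    · exact ⟨∅, Finset.empty_subset _, by simp, by simpa using h1⟩
    · refine ⟨A₁ \ A₁', (Finset.sdiff_subset).trans (Finset.subset_union_right), hoa1, ?_⟩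
      have hd : Disjoint A₂ (A₁ \ A₁') := hA.symm.mono_right Finset.sdiff_subset
      rw [Finset.sdiff_eq_self_of_disjoint hd]
      exact h
  · right
    push_neg at h
    constructor
    · refine ⟨A₂' \ A₂, (Finset.sdiff_subset).trans (Finset.subset_union_right), hoa2, ?_⟩
      have hd : Disjoint A₁' (A₂' \ A₂) := hA'.mono_right Finset.sdiff_subset
      rw [Finset.sdiff_eq_self_of_disjoint hd]
      have h3 : v (A₂' \ (A₂' \ A₂)) ≤ v A₂ := hmono _ _ (by
        intro x hx; simp only [Finset.mem_sdiff, not_and, not_not] at hx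
        exact hx.2 hx.1)
      have h4 : v (A₁ \ (A₁ \ A₁')) ≤ v A₁' := hmono _ _ (by
        intro x hx; simp only [Finset.mem_sdiff, not_and, not_not] at hx
        exact hx.2 hx.1)
      linarith
    · exact ⟨∅, Finset.empty_subset _, by simp, by simpa using h2⟩
end

section
/- Fix an integer c ≥ 1 and intervals I_i = (ℓ_i, r_i] of the real line for i = 1,...,m, with all 2m endpoints distinct and r_1 < r_2 < ... < r_m. Then there exists a c-feasible set S ⊆ {1,...,m} such that for every c-feasible set S' ⊆ {1,...,m} and every i' ∈ {1,...,m}, |S' ∩ {1,...,i'}| ≤ |S ∩ {1,...,i'}|. In particular, S has maximum cardinality among all c-feasible sets. -/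
/-- A set `S` of interval indices is `c`-feasible: every point of the real line belongs to
at most `c` of the intervals `(ℓ i, r i]` with `i ∈ S`. -/
def CFeasible {m : ℕ} (c : ℕ) (ℓ r : Fin m → ℝ) (S : Finset (Fin m)) : Prop :=
  ∀ x : ℝ, ∀ T ⊆ S, (∀ i ∈ T, x ∈ Set.Ioc (ℓ i) (r i)) → T.card ≤ c

lemma cfeasible_iff {m : ℕ} (c : ℕ) (ℓ r : Fin m → ℝ) (S : Finset (Fin m)) :
    CFeasible c ℓ r S ↔
      ∀ x : ℝ, (S.filter (fun i => x ∈ Set.Ioc (ℓ i) (r i))).card ≤ c := by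
  constructor
  · intro h x
    exact h x _ (Finset.filter_subset _ _) (fun i hi => (Finset.mem_filter.mp hi).2)
  · intro h x T hTS hT
    refine le_trans (Finset.card_le_card ?_) (h x)
    intro i hi
    exact Finset.mem_filter.mpr ⟨hTS hi, hT i hi⟩

open Classical in
noncomputable def greedy (m c : ℕ) (ℓ r : Fin m → ℝ) : ℕ → Finset (Fin m)
  | 0 => ∅
  | (k+1) =>
    if h : k < m then
      if CFeasible c ℓ r (insert ⟨k, h⟩ (greedy m c ℓ r k)) then
        insert ⟨k, h⟩ (greedy m c ℓ r k)
      else greedy m c ℓ r k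
    else greedy m c ℓ r k

lemma greedy_succ_pos {m c : ℕ} {ℓ r : Fin m → ℝ} {k : ℕ} (h : k < m)
    (hf : CFeasible c ℓ r (insert ⟨k, h⟩ (greedy m c ℓ r k))) :
    greedy m c ℓ r (k+1) = insert ⟨k, h⟩ (greedy m c ℓ r k) := by
  simp [greedy, h, hf]

lemma greedy_succ_neg {m c : ℕ} {ℓ r : Fin m → ℝ} {k : ℕ} (h : k < m)
    (hf : ¬ CFeasible c ℓ r (insert ⟨k, h⟩ (greedy m c ℓ r k))) :
    greedy m c ℓ r (k+1) = greedy m c ℓ r k := by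
  simp [greedy, h, hf]

lemma greedy_lt {m c : ℕ} {ℓ r : Fin m → ℝ} (k : ℕ) :
    ∀ i ∈ greedy m c ℓ r k, i.val < k := by
  induction k with
  | zero => simp [greedy]
  | succ k ih =>
    intro i hi
    by_cases h : k < m
    · by_cases hf : CFeasible c ℓ r (insert ⟨k, h⟩ (greedy m c ℓ r k))
      · rw [greedy_succ_pos h hf] at hi
        rcases Finset.mem_insert.mp hi with h1 | h1
        · simp [h1]
        · exact Nat.lt_succ_of_lt (ih i h1)
      · rw [greedy_succ_neg h hf] at hi
        exact Nat.lt_succ_of_lt (ih i hi)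
    · have : greedy m c ℓ r (k+1) = greedy m c ℓ r k := by simp [greedy, h]
      rw [this] at hi
      exact Nat.lt_succ_of_lt (ih i hi)

lemma greedy_feasible {m c : ℕ} {ℓ r : Fin m → ℝ} (k : ℕ) :
    CFeasible c ℓ r (greedy m c ℓ r k) := by
  induction k with
  | zero =>
    intro x T hT _
    simp [Finset.subset_empty.mp hT]
  | succ k ih =>
    by_cases h : k < m
    · by_cases hf : CFeasible c ℓ r (insert ⟨k, h⟩ (greedy m c ℓ r k))
      · rw [greedy_succ_pos h hf]; exact hf
      · rw [greedy_succ_neg h hf]; exact ih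
    · have : greedy m c ℓ r (k+1) = greedy m c ℓ r k := by simp [greedy, h]
      rw [this]; exact ih


lemma prefix_exchange {m : ℕ} (B : Finset (Fin m)) {i j : Fin m} (hi : i ∉ B) (hj : j ∈ B)
    (hij : i < j) (i' : Fin m) :
    (B.filter (fun a => a ≤ i')).card ≤ ((insert i (B.erase j)).filter (fun a => a ≤ i')).card := by
  rw [Finset.filter_insert, Finset.filter_erase]
  by_cases hji' : j ≤ i'
  · have hii' : i ≤ i' := le_of_lt (lt_of_lt_of_le hij hji')
    rw [if_pos hii']
    have hjf : j ∈ B.filter (fun a => a ≤ i') := Finset.mem_filter.mpr ⟨hj, hji'⟩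
    have hinotin : i ∉ (B.filter (fun a => a ≤ i')).erase j := by
      intro h
      exact hi (Finset.mem_filter.mp (Finset.mem_of_mem_erase h)).1
    rw [Finset.card_insert_of_notMem hinotin, Finset.card_erase_of_mem hjf]
    have : 1 ≤ (B.filter (fun a => a ≤ i')).card := Finset.card_pos.mpr ⟨j, hjf⟩
    omega
  · have hjf : j ∉ B.filter (fun a => a ≤ i') := by
      intro h; exact hji' (Finset.mem_filter.mp h).2
    rw [Finset.erase_eq_of_notMem hjf]
    by_cases hii' : i ≤ i'
    · rw [if_pos hii']
      exact Finset.card_le_card (Finset.subset_insert _ _)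
    · rw [if_neg hii']

lemma cfeasible_mono {m c : ℕ} {ℓ r : Fin m → ℝ} {S S' : Finset (Fin m)}
    (h : S' ⊆ S) (hS : CFeasible c ℓ r S) : CFeasible c ℓ r S' :=
  fun x T hT hcov => hS x T (hT.trans h) hcov

lemma exchange {m c : ℕ} {ℓ r : Fin m → ℝ} (hsorted : StrictMono r) {a : Fin m}
    {g B1 : Finset (Fin m)}
    (hB1 : CFeasible c ℓ r B1)
    (hga : a ∉ g)
    (hgB : ∀ i : Fin m, i < a → (i ∈ B1 ↔ i ∈ g))
    (hf : CFeasible c ℓ r (insert a g))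
    (hmem : a ∉ B1)
    (hf2 : ¬ CFeasible c ℓ r (insert a B1)) :
    ∃ j ∈ B1, a < j ∧ CFeasible c ℓ r (insert a (B1.erase j)) := by
  classical
  set cov : ℝ → Fin m → Prop := fun y i => y ∈ Set.Ioc (ℓ i) (r i) with hcovdef
  have hB1' := (cfeasible_iff c ℓ r B1).mp hB1
  -- P : problematic points
  set P : ℝ → Prop := fun y => y ∈ Set.Ioc (ℓ a) (r a) ∧ c ≤ (B1.filter (cov y)).card with hP
  set J : ℝ → Finset (Fin m) := fun y => B1.filter (fun j => a < j ∧ cov y j) with hJ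
  -- some problematic point exists
  have hx : ∃ x, P x := by
    rw [cfeasible_iff] at hf2
    push_neg at hf2
    obtain ⟨x, hxc⟩ := hf2
    rw [Finset.filter_insert] at hxc
    by_cases hca : cov x a
    · refine ⟨x, hca, ?_⟩
      have hanot : a ∉ B1.filter (cov x) := fun h => hmem (Finset.mem_filter.mp h).1
      rw [if_pos hca, Finset.card_insert_of_notMem hanot] at hxc
      omega
    · rw [if_neg hca] at hxc
      exact absurd (hB1' x) (by omega)
  -- every problematic point has a late cover
  have hJne : ∀ y, P y → (J y).Nonempty := by
    intro y hPy
    have hsub : B1.filter (cov y) ⊆ (B1.filter (fun j => j < a ∧ cov y j)) ∪ J y := by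
      intro j hj
      obtain ⟨hjB, hjc⟩ := Finset.mem_filter.mp hj
      have hja : j ≠ a := fun h => hmem (h ▸ hjB)
      rcases lt_or_gt_of_ne hja with h | h
      · exact Finset.mem_union_left _ (Finset.mem_filter.mpr ⟨hjB, h, hjc⟩)
      · exact Finset.mem_union_right _ (Finset.mem_filter.mpr ⟨hjB, h, hjc⟩)
    have h1 : (B1.filter (fun j => j < a ∧ cov y j)) ⊆ g.filter (cov y) := by
      intro j hj
      obtain ⟨hjB, hja, hjc⟩ := Finset.mem_filter.mp hj
      exact Finset.mem_filter.mpr ⟨(hgB j hja).mp hjB, hjc⟩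
    have h2 : (g.filter (cov y)).card + 1 ≤ c := by
      have := ((cfeasible_iff c ℓ r (insert a g)).mp hf) y
      rw [Finset.filter_insert, if_pos hPy.1] at this
      have hanot : a ∉ g.filter (cov y) := fun h => hga (Finset.mem_filter.mp h).1
      rw [Finset.card_insert_of_notMem hanot] at this
      exact this
    have hcards : (B1.filter (cov y)).card ≤
        (B1.filter (fun j => j < a ∧ cov y j)).card + (J y).card :=
      le_trans (Finset.card_le_card hsub) (Finset.card_union_le _ _)
    have := hPy.2
    have h3 := Finset.card_le_card h1
    rw [← Finset.card_pos]
    omega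
  -- choose a problematic point minimizing the late-cover set
  obtain ⟨x0, hx0⟩ := hx
  set Ns : Set ℕ := {n | ∃ y, P y ∧ (J y).card = n} with hNs
  have hNsne : Ns.Nonempty := ⟨(J x0).card, x0, hx0, rfl⟩
  obtain ⟨ystar, hPystar, hcardeq⟩ := Nat.sInf_mem hNsne
  have hmin : ∀ y, P y → sInf Ns ≤ (J y).card := fun y hy => Nat.sInf_le ⟨y, hy, rfl⟩
  obtain ⟨j, hjmem⟩ := hJne ystar hPystar
  obtain ⟨hjB1, hja, hjcov⟩ := Finset.mem_filter.mp hjmem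
  -- j covers every problematic point
  have hkey : ∀ y, P y → cov y j := by
    intro y hPy
    rcases le_or_gt ystar y with h | h
    · exact ⟨lt_of_lt_of_le hjcov.1 h, le_of_lt (lt_of_le_of_lt hPy.1.2 (hsorted hja))⟩
    · have hsub : J y ⊆ J ystar := by
        intro j' hj'
        obtain ⟨hj'B, hj'a, hj'c⟩ := Finset.mem_filter.mp hj'
        refine Finset.mem_filter.mpr ⟨hj'B, hj'a, hj'c.1.trans h,
          le_of_lt (lt_of_le_of_lt hPystar.1.2 (hsorted hj'a))⟩
      have : J y = J ystar := Finset.eq_of_subset_of_card_le hsub (by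
        rw [hcardeq]; exact hmin y hPy)
      have hjy : j ∈ J y := this ▸ hjmem
      exact (Finset.mem_filter.mp hjy).2.2
  refine ⟨j, hjB1, hja, ?_⟩
  rw [cfeasible_iff]
  intro y
  rw [Finset.filter_insert, Finset.filter_erase]
  by_cases hca : cov y a
  · rw [if_pos hca]
    have hanot : a ∉ (B1.filter (cov y)).erase j := by
      intro h
      exact hmem (Finset.mem_filter.mp (Finset.mem_of_mem_erase h)).1
    rw [Finset.card_insert_of_notMem hanot]
    by_cases hcy : c ≤ (B1.filter (cov y)).card
    · have hjy : j ∈ B1.filter (cov y) := Finset.mem_filter.mpr ⟨hjB1, hkey y ⟨hca, hcy⟩⟩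
      have h1 : 1 ≤ (B1.filter (cov y)).card := Finset.card_pos.mpr ⟨j, hjy⟩
      rw [Finset.card_erase_of_mem hjy]
      have hle : (B1.filter (cov y)).card ≤ c := hB1' y
      omega
    · have h2 : ((B1.filter (cov y)).erase j).card ≤ (B1.filter (cov y)).card :=
        Finset.card_le_card (Finset.erase_subset _ _)
      omega
  · rw [if_neg hca]
    refine le_trans (Finset.card_le_card ?_) (hB1' y)
    exact Finset.erase_subset _ _


lemma main_lemma {m c : ℕ} {ℓ r : Fin m → ℝ} (hsorted : StrictMono r) (k : ℕ)
    (B : Finset (Fin m)) (hB : CFeasible c ℓ r B) :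
    ∃ B' : Finset (Fin m), CFeasible c ℓ r B' ∧
      (∀ i : Fin m, i.val < k → (i ∈ B' ↔ i ∈ greedy m c ℓ r k)) ∧
      (∀ i' : Fin m, (B.filter (fun a => a ≤ i')).card ≤ (B'.filter (fun a => a ≤ i')).card) := by
  induction k with
  | zero => exact ⟨B, hB, fun i hi => absurd hi (Nat.not_lt_zero _), fun i' => le_refl _⟩
  | succ k ih =>
    obtain ⟨B1, hB1, hagree, hcount⟩ := ih
    by_cases hk : k < m
    · set a : Fin m := ⟨k, hk⟩ with hadef
      have hga : a ∉ greedy m c ℓ r k := fun h => absurd (greedy_lt k a h) (by simp [hadef])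
      have hgB : ∀ i : Fin m, i < a → (i ∈ B1 ↔ i ∈ greedy m c ℓ r k) := by
        intro i hi
        exact hagree i (by simpa [Fin.lt_def, hadef] using hi)
      by_cases hf : CFeasible c ℓ r (insert a (greedy m c ℓ r k))
      · have hgsucc : greedy m c ℓ r (k+1) = insert a (greedy m c ℓ r k) :=
          greedy_succ_pos hk hf
        by_cases hmem : a ∈ B1
        · refine ⟨B1, hB1, ?_, hcount⟩
          intro i hi
          rw [hgsucc, Finset.mem_insert]
          rcases Nat.lt_succ_iff_lt_or_eq.mp hi with hlt | heq
          · have hne : i ≠ a := by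
              intro h; rw [h] at hlt; simp [hadef] at hlt
            rw [hagree i hlt]
            simp [hne]
          · have hia : i = a := Fin.ext (by simpa [hadef] using heq)
            simp [hia, hmem]
        · by_cases hf2 : CFeasible c ℓ r (insert a B1)
          · refine ⟨insert a B1, hf2, ?_, ?_⟩
            · intro i hi
              rw [hgsucc, Finset.mem_insert, Finset.mem_insert]
              rcases Nat.lt_succ_iff_lt_or_eq.mp hi with hlt | heq
              · have hne : i ≠ a := by
                  intro h; rw [h] at hlt; simp [hadef] at hlt
                rw [hagree i hlt]
              · have hia : i = a := Fin.ext (by simpa [hadef] using heq)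
                simp [hia]
            · intro i'
              refine (hcount i').trans (Finset.card_le_card ?_)
              exact Finset.filter_subset_filter _ (Finset.subset_insert _ _)
          · obtain ⟨j, hjB1, hja, hfeas⟩ :=
              exchange hsorted hB1 hga hgB hf hmem hf2
            refine ⟨insert a (B1.erase j), hfeas, ?_, ?_⟩
            · intro i hi
              rw [hgsucc, Finset.mem_insert, Finset.mem_insert]
              rcases Nat.lt_succ_iff_lt_or_eq.mp hi with hlt | heq
              · have hne : i ≠ a := by
                  intro h; rw [h] at hlt; simp [hadef] at hlt
                have hnej : i ≠ j := by
                  intro h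
                  rw [h] at hlt
                  have : (a : Fin m).val < j.val := hja
                  simp [hadef] at this
                  omega
                rw [Finset.mem_erase]
                simp only [hnej, true_and, ne_eq, not_false_iff]
                rw [hagree i hlt]
              · have hia : i = a := Fin.ext (by simpa [hadef] using heq)
                simp [hia]
            · intro i'
              exact (hcount i').trans (prefix_exchange B1 hmem hjB1 hja i')
      · have hgsucc : greedy m c ℓ r (k+1) = greedy m c ℓ r k :=
          greedy_succ_neg hk hf
        have hmem : a ∉ B1 := by
          intro hmem
          apply hf
          refine cfeasible_mono ?_ hB1
          intro x hx
          rcases Finset.mem_insert.mp hx with h | h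
          · rwa [h]
          · exact (hagree x (greedy_lt k x h)).mpr h
        refine ⟨B1, hB1, ?_, hcount⟩
        intro i hi
        rw [hgsucc]
        rcases Nat.lt_succ_iff_lt_or_eq.mp hi with hlt | heq
        · exact hagree i hlt
        · have hia : i = a := Fin.ext (by simpa [hadef] using heq)
          rw [hia]
          simp [hmem, hga]
    · have hgsucc : greedy m c ℓ r (k+1) = greedy m c ℓ r k := by simp [greedy, hk]
      refine ⟨B1, hB1, ?_, hcount⟩
      intro i hi
      rw [hgsucc]
      exact hagree i (lt_of_lt_of_le i.isLt (le_of_not_gt hk))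

/-- the greedy solution of the (m, c)-interval scheduling problem dominates
every c-feasible set prefix-wise; in particular it has maximum cardinality. -/
theorem stmt_9 (m c : ℕ) (hc : 1 ≤ c) (ℓ r : Fin m → ℝ)
    (hdistinct : Function.Injective (Sum.elim ℓ r : Fin m ⊕ Fin m → ℝ))
    (hsorted : StrictMono r) :
    ∃ S : Finset (Fin m), CFeasible c ℓ r S ∧
      ∀ S' : Finset (Fin m), CFeasible c ℓ r S' →
        (∀ i' : Fin m,
          (S'.filter (fun i => i ≤ i')).card ≤ (S.filter (fun i => i ≤ i')).card) ∧
        S'.card ≤ S.card := by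
  rcases Nat.eq_zero_or_pos m with hm | hm
  · subst hm
    refine ⟨∅, ?_, ?_⟩
    · intro x T hT _
      simp [Finset.subset_empty.mp hT]
    · intro S' _
      have hS' : S' = ∅ := Finset.eq_empty_of_forall_notMem (fun x _ => x.elim0)
      exact ⟨fun i' => i'.elim0, by simp [hS']⟩
  · refine ⟨greedy m c ℓ r m, greedy_feasible m, ?_⟩
    intro S' hS'
    obtain ⟨B', hB'feas, hagree, hcount⟩ := main_lemma hsorted m S' hS'
    have hB'eq : B' = greedy m c ℓ r m := by
      ext i
      exact hagree i i.isLt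
    have hpre : ∀ i' : Fin m,
        (S'.filter (fun i => i ≤ i')).card ≤ ((greedy m c ℓ r m).filter (fun i => i ≤ i')).card := by
      intro i'
      have := hcount i'
      rwa [hB'eq] at this
    refine ⟨hpre, ?_⟩
    have hlast := hpre ⟨m - 1, by omega⟩
    have h1 : S'.filter (fun i => i ≤ (⟨m - 1, by omega⟩ : Fin m)) = S' := by
      apply Finset.filter_true_of_mem
      intro i _
      rw [Fin.le_def]
      have := i.isLt
      simp
      omega
    have h2 : (greedy m c ℓ r m).filter (fun i => i ≤ (⟨m - 1, by omega⟩ : Fin m))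
        ⊆ greedy m c ℓ r m := Finset.filter_subset _ _
    calc S'.card = (S'.filter (fun i => i ≤ (⟨m - 1, by omega⟩ : Fin m))).card := by rw [h1]
      _ ≤ ((greedy m c ℓ r m).filter (fun i => i ≤ (⟨m - 1, by omega⟩ : Fin m))).card := hlast
      _ ≤ (greedy m c ℓ r m).card := Finset.card_le_card h2
end

section
/- For two agents with monotone non-decreasing valuations v_1, v_2 (with v_1(∅) = v_2(∅) = 0) and any finite bipartite conflict graph G, there exists an allocation (A_1, A_2) that is both maximal and EF1. -/
open Finset Classical

section Aux

variable {α : Type*} [Fintype α] [DecidableEq α]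

open Classical in
/-- First bundle: `U` together with the `Q`-side vertices having no neighbor in `U`. -/
noncomputable def bund1 (G : SimpleGraph α) (Q : α → Prop) (U : Finset α) : Finset α :=
  U ∪ univ.filter (fun x => Q x ∧ ∀ u ∈ U, ¬ G.Adj x u)

open Classical in
/-- Second bundle: the complement of `U` in the non-`Q` side, together with the `Q`-side
vertices all of whose neighbors lie in `U`. -/
noncomputable def bund2 (G : SimpleGraph α) (Q : α → Prop) (U : Finset α) : Finset α :=
  (univ.filter (fun a => ¬ Q a) \ U) ∪ univ.filter (fun x => Q x ∧ ∀ b, G.Adj x b → b ∈ U)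

lemma mem_bund1 {G : SimpleGraph α} {Q : α → Prop} {U : Finset α} {a : α} :
    a ∈ bund1 G Q U ↔ a ∈ U ∨ (Q a ∧ ∀ u ∈ U, ¬ G.Adj a u) := by
  classical
  simp [bund1]

lemma mem_bund2 {G : SimpleGraph α} {Q : α → Prop} {U : Finset α} {a : α} :
    a ∈ bund2 G Q U ↔ (¬ Q a ∧ a ∉ U) ∨ (Q a ∧ ∀ b, G.Adj a b → b ∈ U) := by
  classical
  simp [bund2]

variable {G : SimpleGraph α} {Q : α → Prop}

lemma bund_disj (hadj : ∀ a b, G.Adj a b → (Q a ↔ ¬ Q b))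
    (hnbr : ∀ a, Q a → ∃ b, G.Adj a b) {U : Finset α} (hU : ∀ a ∈ U, ¬ Q a) :
    ∀ a ∈ bund1 G Q U, a ∉ bund2 G Q U := by
  intro a h1 h2
  rw [mem_bund1] at h1
  rw [mem_bund2] at h2
  rcases h1 with h1 | ⟨hQ, hall⟩
  · rcases h2 with ⟨_, haU⟩ | ⟨hQ, _⟩
    · exact haU h1
    · exact hU a h1 hQ
  · rcases h2 with ⟨hnQ, _⟩ | ⟨_, himp⟩
    · exact hnQ hQ
    · obtain ⟨b, hb⟩ := hnbr a hQ
      exact hall b (himp b hb) hb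

lemma bund1_indep (hadj : ∀ a b, G.Adj a b → (Q a ↔ ¬ Q b))
    {U : Finset α} (hU : ∀ a ∈ U, ¬ Q a) :
    ∀ x ∈ bund1 G Q U, ∀ y ∈ bund1 G Q U, ¬ G.Adj x y := by
  intro x hx y hy hxy
  rw [mem_bund1] at hx hy
  rcases hx with hx | ⟨hQx, hallx⟩
  · rcases hy with hy | ⟨hQy, hally⟩
    · exact hU x hx ((hadj x y hxy).mpr (hU y hy))
    · exact hally x hx hxy.symm
  · rcases hy with hy | ⟨hQy, hally⟩
    · exact hallx y hy hxy
    · exact (hadj x y hxy).mp hQx hQy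

lemma bund2_indep (hadj : ∀ a b, G.Adj a b → (Q a ↔ ¬ Q b)) {U : Finset α} :
    ∀ x ∈ bund2 G Q U, ∀ y ∈ bund2 G Q U, ¬ G.Adj x y := by
  intro x hx y hy hxy
  rw [mem_bund2] at hx hy
  rcases hx with ⟨hnQx, hxU⟩ | ⟨hQx, himpx⟩
  · rcases hy with ⟨hnQy, _⟩ | ⟨hQy, himpy⟩
    · exact hnQx ((hadj x y hxy).mpr hnQy)
    · exact hxU (himpy x hxy.symm)
  · rcases hy with ⟨_, hyU⟩ | ⟨hQy, _⟩
    · exact hyU (himpx y hxy)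
    · exact (hadj x y hxy).mp hQx hQy

lemma bund_max (hadj : ∀ a b, G.Adj a b → (Q a ↔ ¬ Q b)) {U : Finset α} :
    ∀ o : α, o ∉ bund1 G Q U → o ∉ bund2 G Q U →
      (∃ x ∈ bund1 G Q U, G.Adj o x) ∧ (∃ x ∈ bund2 G Q U, G.Adj o x) := by
  intro o h1 h2
  have hQ : Q o := by
    by_contra hnQ
    have hoU : o ∉ U := fun h => h1 (mem_bund1.mpr (Or.inl h))
    exact h2 (mem_bund2.mpr (Or.inl ⟨hnQ, hoU⟩))
  have h1' : ¬ ∀ u ∈ U, ¬ G.Adj o u := fun h => h1 (mem_bund1.mpr (Or.inr ⟨hQ, h⟩))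
  push_neg at h1'
  obtain ⟨u, huU, hou⟩ := h1'
  have h2' : ¬ ∀ b, G.Adj o b → b ∈ U := fun h => h2 (mem_bund2.mpr (Or.inr ⟨hQ, h⟩))
  push_neg at h2'
  obtain ⟨b, hob, hbU⟩ := h2'
  have hnb : ¬ Q b := (hadj o b hob).mp hQ
  exact ⟨⟨u, mem_bund1.mpr (Or.inl huU), hou⟩,
    ⟨b, mem_bund2.mpr (Or.inl ⟨hnb, hbU⟩), hob⟩⟩

open Classical in
lemma bund1_empty (G : SimpleGraph α) (Q : α → Prop) :
    bund1 G Q (∅ : Finset α) = univ.filter Q := by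
  ext a
  rw [mem_bund1]
  simp

open Classical in
lemma bund2_empty (G : SimpleGraph α) (Q : α → Prop)
    (hnbr : ∀ a, Q a → ∃ b, G.Adj a b) :
    bund2 G Q (∅ : Finset α) = univ.filter (fun a => ¬ Q a) := by
  ext a
  rw [mem_bund2]
  simp only [Finset.notMem_empty, not_false_iff, and_true, mem_filter, mem_univ, true_and]
  constructor
  · rintro (h | ⟨hQ, himp⟩)
    · exact h
    · obtain ⟨b, hb⟩ := hnbr a hQ
      exact absurd (himp b hb) (by simp)
  · exact Or.inl

open Classical in
lemma bund1_top (hadj : ∀ a b, G.Adj a b → (Q a ↔ ¬ Q b))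
    (hnbr : ∀ a, Q a → ∃ b, G.Adj a b) :
    bund1 G Q (univ.filter (fun a => ¬ Q a)) = univ.filter (fun a => ¬ Q a) := by
  ext a
  rw [mem_bund1]
  constructor
  · rintro (h | ⟨hQ, hall⟩)
    · exact h
    · obtain ⟨b, hb⟩ := hnbr a hQ
      have : ¬ Q b := (hadj a b hb).mp hQ
      exact absurd hb (hall b (by simp [this]))
  · exact Or.inl

open Classical in
lemma bund2_top (hadj : ∀ a b, G.Adj a b → (Q a ↔ ¬ Q b)) :
    bund2 G Q (univ.filter (fun a => ¬ Q a)) = univ.filter Q := by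
  ext a
  rw [mem_bund2]
  simp only [mem_filter, mem_univ, true_and]
  constructor
  · rintro (⟨hnQ, hne⟩ | ⟨hQ, _⟩)
    · exact absurd hnQ (by simpa using hne)
    · exact hQ
  · intro hQ
    exact Or.inr ⟨hQ, fun b hb => by simp [(hadj a b hb).mp hQ]⟩

open Classical in
/-- Key descent lemma: starting from an allocation in the family with
`w (bund2) ≤ w (bund1)`, there is a member of the family balanced up to one item. -/
lemma key_s11 (G : SimpleGraph α) (Q : α → Prop)
    (hadj : ∀ a b, G.Adj a b → (Q a ↔ ¬ Q b))
    (hnbr : ∀ a, Q a → ∃ b, G.Adj a b)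
    (w : Finset α → ℝ) (hw : ∀ S T : Finset α, S ⊆ T → w S ≤ w T)
    (hXY : w (univ.filter Q) ≤ w (univ.filter (fun a => ¬ Q a))) :
    ∀ U : Finset α, (∀ a ∈ U, ¬ Q a) →
      w (bund2 G Q U) ≤ w (bund1 G Q U) →
      ∃ U' : Finset α, (∀ a ∈ U', ¬ Q a) ∧
        (∃ S : Finset α, S ⊆ bund1 G Q U' ∪ bund2 G Q U' ∧ S.card ≤ 1 ∧
          w (bund2 G Q U' \ S) ≤ w (bund1 G Q U' \ S)) ∧
        (∃ S : Finset α, S ⊆ bund1 G Q U' ∪ bund2 G Q U' ∧ S.card ≤ 1 ∧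
          w (bund1 G Q U' \ S) ≤ w (bund2 G Q U' \ S)) := by
  intro U
  induction U using Finset.strongInduction with
  | _ U ih =>
    intro hU hinv
    by_cases hb : ∃ S : Finset α, S ⊆ bund1 G Q U ∪ bund2 G Q U ∧ S.card ≤ 1 ∧
        w (bund1 G Q U \ S) ≤ w (bund2 G Q U \ S)
    · exact ⟨U, hU, ⟨∅, Finset.empty_subset _, by simp, by simpa using hinv⟩, hb⟩
    · push_neg at hb
      -- U is nonempty, otherwise contradiction with hXY
      have hUne : U ≠ ∅ := by
        intro h
        subst h
        have := hb ∅ (Finset.empty_subset _) (by simp)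
        rw [bund1_empty, bund2_empty G Q hnbr] at this
        simp only [Finset.sdiff_empty] at this
        linarith
      obtain ⟨y, hy⟩ := Finset.nonempty_of_ne_empty hUne
      set U' := U.erase y with hU'def
      have hU' : ∀ a ∈ U', ¬ Q a := fun a ha => hU a (Finset.mem_of_mem_erase ha)
      by_cases hinv' : w (bund2 G Q U') ≤ w (bund1 G Q U')
      · exact ih U' (Finset.erase_ssubset hy) hU' hinv'
      · push_neg at hinv'
        refine ⟨U', hU', ⟨{y}, ?_, by simp, ?_⟩, ⟨∅, Finset.empty_subset _, by simp,
          by simpa using hinv'.le⟩⟩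
        · -- {y} ⊆ bund1 U' ∪ bund2 U'
          have : y ∈ bund2 G Q U' :=
            mem_bund2.mpr (Or.inl ⟨hU y hy, Finset.notMem_erase y U⟩)
          simpa using Finset.mem_union_right _ this
        · -- main chain
          have h1 : bund1 G Q U \ {y} ⊆ bund1 G Q U' := by
            intro a ha
            rw [Finset.mem_sdiff, Finset.mem_singleton] at ha
            obtain ⟨haB, hay⟩ := ha
            rw [mem_bund1] at haB ⊢
            rcases haB with h | ⟨hQ, hall⟩
            · exact Or.inl (Finset.mem_erase.mpr ⟨hay, h⟩)
            · exact Or.inr ⟨hQ, fun u hu => hall u (Finset.mem_of_mem_erase hu)⟩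
          have h2 : bund2 G Q U' \ {y} ⊆ bund2 G Q U := by
            intro a ha
            rw [Finset.mem_sdiff, Finset.mem_singleton] at ha
            obtain ⟨haB, hay⟩ := ha
            rw [mem_bund2] at haB ⊢
            rcases haB with ⟨hnQ, haU'⟩ | ⟨hQ, himp⟩
            · exact Or.inl ⟨hnQ, fun h => haU' (Finset.mem_erase.mpr ⟨hay, h⟩)⟩
            · exact Or.inr ⟨hQ, fun b hb => Finset.mem_of_mem_erase (himp b hb)⟩
          have h3 : y ∉ bund2 G Q U := by
            rw [mem_bund2]
            rintro (⟨_, hyU⟩ | ⟨hQ, _⟩)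
            · exact hyU hy
            · exact hU y hy hQ
          have h4 : y ∉ bund1 G Q U' := by
            rw [mem_bund1]
            rintro (h | ⟨hQ, _⟩)
            · exact Finset.notMem_erase y U h
            · exact hU y hy hQ
          have h5 : w (bund2 G Q U \ {y}) < w (bund1 G Q U \ {y}) := by
            refine hb {y} ?_ (by simp)
            have : y ∈ bund1 G Q U := mem_bund1.mpr (Or.inl hy)
            simpa using Finset.mem_union_left _ this
          have e3 : bund2 G Q U \ {y} = bund2 G Q U := by
            rw [Finset.sdiff_singleton_eq_erase, Finset.erase_eq_of_notMem h3]
          have e4 : bund1 G Q U' \ {y} = bund1 G Q U' := by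
            rw [Finset.sdiff_singleton_eq_erase, Finset.erase_eq_of_notMem h4]
          have c1 : w (bund2 G Q U' \ {y}) ≤ w (bund2 G Q U) := hw _ _ h2
          have c2 : w (bund1 G Q U \ {y}) ≤ w (bund1 G Q U') := hw _ _ h1
          rw [e3] at h5
          rw [e4]
          linarith

end Aux

/-- for two agents with monotone non-decreasing valuations and any bipartite
conflict graph, a maximal and EF1 allocation exists. -/
theorem stmt_11 {α : Type*} [Fintype α] [DecidableEq α] (G : SimpleGraph α)
    (hbip : ∃ P : α → Bool, ∀ x y : α, G.Adj x y → P x ≠ P y)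
    (v : Fin 2 → Finset α → ℝ)
    (hzero : ∀ i, v i ∅ = 0)
    (hmono : ∀ i, ∀ S T : Finset α, S ⊆ T → v i S ≤ v i T) :
    ∃ A : Fin 2 → Finset α,
      (∀ i j : Fin 2, i ≠ j → Disjoint (A i) (A j)) ∧
      (∀ i : Fin 2, ∀ x ∈ A i, ∀ y ∈ A i, ¬ G.Adj x y) ∧
      (∀ o : α, (∀ i : Fin 2, o ∉ A i) → ∀ i : Fin 2, ∃ x ∈ A i, G.Adj o x) ∧
      (∀ i j : Fin 2, ∃ S : Finset α, S ⊆ A i ∪ A j ∧ S.card ≤ 1 ∧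
        v i (A i \ S) ≥ v i (A j \ S)) := by
  classical
  obtain ⟨P, hP⟩ := hbip
  set w : Finset α → ℝ := v 0 with hwdef
  have hwmono : ∀ S T : Finset α, S ⊆ T → w S ≤ w T := hmono 0
  -- two candidate labelings
  have hQgen : ∀ c : Bool,
      (∀ a b : α, G.Adj a b → ((P a = c ∧ ∃ x, G.Adj a x) ↔ ¬ (P b = c ∧ ∃ x, G.Adj b x))) := by
    intro c a b hab
    constructor
    · rintro ⟨ha, _⟩ ⟨hb, _⟩
      exact hP a b hab (ha.trans hb.symm)
    · intro hnb
      have hb' : P b ≠ c := fun h => hnb ⟨h, a, hab.symm⟩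
      have hne := hP a b hab
      refine ⟨?_, b, hab⟩
      cases c <;> cases hx : P a <;> cases hy : P b <;> simp_all
  have hnbrgen : ∀ c : Bool, ∀ a : α, (P a = c ∧ ∃ x, G.Adj a x) → ∃ b, G.Adj a b :=
    fun c a h => h.2
  -- WLOG: one of the two labelings satisfies w X ≤ w Y
  obtain ⟨Q1, hQ1def⟩ : ∃ Q : α → Prop, Q = fun a => P a = true ∧ ∃ x, G.Adj a x := ⟨_, rfl⟩
  obtain ⟨Q2, hQ2def⟩ : ∃ Q : α → Prop, Q = fun a => P a = false ∧ ∃ x, G.Adj a x := ⟨_, rfl⟩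
  have hadj1 : ∀ a b, G.Adj a b → (Q1 a ↔ ¬ Q1 b) := by
    simp only [hQ1def]; exact hQgen true
  have hadj2 : ∀ a b, G.Adj a b → (Q2 a ↔ ¬ Q2 b) := by
    simp only [hQ2def]; exact hQgen false
  have hnbr1 : ∀ a, Q1 a → ∃ b, G.Adj a b := by
    simp only [hQ1def]; exact fun a h => h.2
  have hnbr2 : ∀ a, Q2 a → ∃ b, G.Adj a b := by
    simp only [hQ2def]; exact fun a h => h.2
  have hor : w (Finset.univ.filter Q1) ≤ w (Finset.univ.filter (fun a => ¬ Q1 a)) ∨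
      w (Finset.univ.filter Q2) ≤ w (Finset.univ.filter (fun a => ¬ Q2 a)) := by
    by_contra h
    push_neg at h
    obtain ⟨h1, h2⟩ := h
    have s12 : Finset.univ.filter Q1 ⊆ Finset.univ.filter (fun a => ¬ Q2 a) := by
      intro a ha
      simp only [Finset.mem_filter, Finset.mem_univ, true_and, hQ1def, hQ2def] at *
      rintro ⟨hf, _⟩
      exact absurd (ha.1.symm.trans hf) (by simp)
    have s21 : Finset.univ.filter Q2 ⊆ Finset.univ.filter (fun a => ¬ Q1 a) := by
      intro a ha
      simp only [Finset.mem_filter, Finset.mem_univ, true_and, hQ1def, hQ2def] at *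
      rintro ⟨hf, _⟩
      exact absurd (ha.1.symm.trans hf) (by simp)
    have c1 := hwmono _ _ s12
    have c2 := hwmono _ _ s21
    linarith
  -- pick the good labeling
  have main : ∃ B1 B2 : Finset α,
      (∀ a ∈ B1, a ∉ B2) ∧
      (∀ x ∈ B1, ∀ y ∈ B1, ¬ G.Adj x y) ∧
      (∀ x ∈ B2, ∀ y ∈ B2, ¬ G.Adj x y) ∧
      (∀ o : α, o ∉ B1 → o ∉ B2 → (∃ x ∈ B1, G.Adj o x) ∧ (∃ x ∈ B2, G.Adj o x)) ∧
      (∃ S : Finset α, S ⊆ B1 ∪ B2 ∧ S.card ≤ 1 ∧ w (B2 \ S) ≤ w (B1 \ S)) ∧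
      (∃ S : Finset α, S ⊆ B1 ∪ B2 ∧ S.card ≤ 1 ∧ w (B1 \ S) ≤ w (B2 \ S)) := by
    have build : ∀ Q : α → Prop,
        (∀ a b, G.Adj a b → (Q a ↔ ¬ Q b)) →
        (∀ a, Q a → ∃ b, G.Adj a b) →
        w (Finset.univ.filter Q) ≤ w (Finset.univ.filter (fun a => ¬ Q a)) →
        ∃ B1 B2 : Finset α,
          (∀ a ∈ B1, a ∉ B2) ∧
          (∀ x ∈ B1, ∀ y ∈ B1, ¬ G.Adj x y) ∧
          (∀ x ∈ B2, ∀ y ∈ B2, ¬ G.Adj x y) ∧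
          (∀ o : α, o ∉ B1 → o ∉ B2 → (∃ x ∈ B1, G.Adj o x) ∧ (∃ x ∈ B2, G.Adj o x)) ∧
          (∃ S : Finset α, S ⊆ B1 ∪ B2 ∧ S.card ≤ 1 ∧ w (B2 \ S) ≤ w (B1 \ S)) ∧
          (∃ S : Finset α, S ⊆ B1 ∪ B2 ∧ S.card ≤ 1 ∧ w (B1 \ S) ≤ w (B2 \ S)) := by
      intro Q hadj hnbr hXY
      have hUY : ∀ a ∈ Finset.univ.filter (fun a => ¬ Q a), ¬ Q a := by
        intro a ha
        simpa using (Finset.mem_filter.mp ha).2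
      have hinv : w (bund2 G Q (Finset.univ.filter (fun a => ¬ Q a))) ≤
          w (bund1 G Q (Finset.univ.filter (fun a => ¬ Q a))) := by
        rw [bund1_top hadj hnbr, bund2_top hadj]
        exact hXY
      obtain ⟨U', hU', d1, d2⟩ := key_s11 G Q hadj hnbr w hwmono hXY _ hUY hinv
      exact ⟨bund1 G Q U', bund2 G Q U', bund_disj hadj hnbr hU',
        bund1_indep hadj hU', bund2_indep hadj, bund_max hadj, d1, d2⟩
    rcases hor with h | h
    · exact build Q1 hadj1 hnbr1 h
    · exact build Q2 hadj2 hnbr2 h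
  obtain ⟨B1, B2, hdisj, hi1, hi2, hmax, ⟨S1, hS1u, hS1c, hS1⟩, ⟨S2, hS2u, hS2c, hS2⟩⟩ := main
  rcases le_total (v 1 B1) (v 1 B2) with hch | hch
  · refine ⟨![B1, B2], ?_, ?_, ?_, ?_⟩
    · intro i j hij
      fin_cases i <;> fin_cases j
      · exact absurd rfl hij
      · exact Finset.disjoint_left.mpr hdisj
      · exact (Finset.disjoint_left.mpr hdisj).symm
      · exact absurd rfl hij
    · intro i
      fin_cases i
      · exact hi1
      · exact hi2
    · intro o ho i
      have h1 : o ∉ B1 := ho 0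
      have h2 : o ∉ B2 := ho 1
      fin_cases i
      · exact (hmax o h1 h2).1
      · exact (hmax o h1 h2).2
    · intro i j
      fin_cases i <;> fin_cases j
      · exact ⟨∅, Finset.empty_subset _, by simp, le_refl _⟩
      · exact ⟨S1, hS1u, hS1c, hS1⟩
      · exact ⟨∅, Finset.empty_subset _, by simp, by simpa using hch⟩
      · exact ⟨∅, Finset.empty_subset _, by simp, le_refl _⟩
  · refine ⟨![B2, B1], ?_, ?_, ?_, ?_⟩
    · intro i j hij
      fin_cases i <;> fin_cases j
      · exact absurd rfl hij
      · exact (Finset.disjoint_left.mpr hdisj).symm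
      · exact Finset.disjoint_left.mpr hdisj
      · exact absurd rfl hij
    · intro i
      fin_cases i
      · exact hi2
      · exact hi1
    · intro o ho i
      have h1 : o ∉ B2 := ho 0
      have h2 : o ∉ B1 := ho 1
      fin_cases i
      · exact (hmax o h2 h1).2
      · exact (hmax o h2 h1).1
    · intro i j
      fin_cases i <;> fin_cases j
      · exact ⟨∅, Finset.empty_subset _, by simp, le_refl _⟩
      · exact ⟨S2, by rwa [Finset.union_comm], hS2c, hS2⟩
      · exact ⟨∅, Finset.empty_subset _, by simp, by simpa using hch⟩
      · exact ⟨∅, Finset.empty_subset _, by simp, le_refl _⟩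
end

section
/- Consider two agents and two items o_1, o_2 whose conflict graph is the single edge {o_1, o_2}, and where both agents have the same additive valuation v with v(o_1) = 1 and v(o_2) = −1. Then no allocation (A_1, A_2) is both maximal and EF1. (In particular, for two agents with identical additive non-monotone valuations on a path graph, a maximal EF1 allocation may fail to exist.) -/
/-- The identical additive valuation with values 1 (a good) and -1 (a chore). -/
noncomputable def v12 (S : Finset (Fin 2)) : ℝ := ∑ o ∈ S, (![1, -1] : Fin 2 → ℝ) o

/-- two items joined by a single edge, one good of value 1 and one chore of
value -1; no allocation is both maximal and EF1. -/
theorem stmt_12 :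
    ¬ ∃ A : Fin 2 → Finset (Fin 2),
      (∀ i j : Fin 2, i ≠ j → Disjoint (A i) (A j)) ∧
      (∀ i : Fin 2, ∀ x ∈ A i, ∀ y ∈ A i, ¬ x ≠ y) ∧
      (∀ o : Fin 2, (∀ i : Fin 2, o ∉ A i) → ∀ i : Fin 2, ∃ x ∈ A i, o ≠ x) ∧
      (∀ i j : Fin 2, ∃ S : Finset (Fin 2), S ⊆ A i ∪ A j ∧ S.card ≤ 1 ∧
        v12 (A i \ S) ≥ v12 (A j \ S)) := by
  rintro ⟨A, hdisj, hind, hmax, hEF1⟩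
  have key : ∀ o : Fin 2, ∃ i, o ∈ A i := by
    intro o
    by_contra h
    push_neg at h
    obtain ⟨x, hx, hxo⟩ := hmax o h 0
    obtain ⟨y, hy, hyo⟩ := hmax o h 1
    have hxy : x = y := by omega
    exact (Finset.disjoint_left.mp (hdisj 0 1 (by decide)) hx) (hxy ▸ hy)
  obtain ⟨i0, hi0⟩ := key 0
  obtain ⟨i1, hi1⟩ := key 1
  have hA0 : A i0 = {0} := by
    ext z
    simp only [Finset.mem_singleton]
    constructor
    · intro hz; exact not_ne_iff.mp (hind i0 z hz 0 hi0)
    · rintro rfl; exact hi0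
  have hA1 : A i1 = {1} := by
    ext z
    simp only [Finset.mem_singleton]
    constructor
    · intro hz; exact not_ne_iff.mp (hind i1 z hz 1 hi1)
    · rintro rfl; exact hi1
  obtain ⟨S, hS, hcard, hv⟩ := hEF1 i1 i0
  rw [hA1, hA0] at hv
  have hS3 : S = ∅ ∨ S = {0} ∨ S = {1} :=
    (by decide : ∀ S : Finset (Fin 2), S.card ≤ 1 → S = ∅ ∨ S = {0} ∨ S = {1}) S hcard
  rcases hS3 with rfl | rfl | rfl
  · have e1 : ({1} : Finset (Fin 2)) \ ∅ = {1} := by decide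
    have e0 : ({0} : Finset (Fin 2)) \ ∅ = {0} := by decide
    rw [e1, e0] at hv
    simp [v12] at hv
    norm_num at hv
  · have e1 : ({1} : Finset (Fin 2)) \ {0} = {1} := by decide
    have e0 : ({0} : Finset (Fin 2)) \ {0} = ∅ := by decide
    rw [e1, e0] at hv
    simp [v12] at hv
    norm_num at hv
  · have e1 : ({1} : Finset (Fin 2)) \ {1} = ∅ := by decide
    have e0 : ({0} : Finset (Fin 2)) \ {1} = {0} := by decide
    rw [e1, e0] at hv
    simp [v12] at hv
    norm_num at hv
end

section
/- For every integer n ≥ 4, consider n agents and m = n + 2 items o_1,...,o_{n+2} whose conflict graph is the complete bipartite graph K_{3, n−1} with parts {o_1, o_2, o_3} and {o_4,...,o_{n+2}}. All agents share the additive valuation v with v(o) = 2 for o ∈ {o_1, o_2, o_3} and v(o) = 3 for all other items. Then no allocation (A_1,...,A_n) is both maximal and EF1. -/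
/-- for n ≥ 4 agents and m = n + 2 items on the complete bipartite conflict
graph K_{3, n-1} (parts {0,1,2} and {3,...,n+1}), with identical additive valuation giving
value 2 to the items of the left part and 3 to the others, no allocation is both maximal
and EF1. -/
theorem stmt_14 (n : ℕ) (hn : 4 ≤ n) :
    ¬ ∃ A : Fin n → Finset (Fin (n + 2)),
      (∀ i j : Fin n, i ≠ j → Disjoint (A i) (A j)) ∧
      (∀ i : Fin n, ∀ x ∈ A i, ∀ y ∈ A i,
        ¬ ((x.val < 3 ∧ 3 ≤ y.val) ∨ (y.val < 3 ∧ 3 ≤ x.val))) ∧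
      (∀ o : Fin (n + 2), (∀ i : Fin n, o ∉ A i) → ∀ i : Fin n,
        ∃ x ∈ A i, ((o.val < 3 ∧ 3 ≤ x.val) ∨ (x.val < 3 ∧ 3 ≤ o.val))) ∧
      (∀ i j : Fin n, ∃ S : Finset (Fin (n + 2)), S ⊆ A i ∪ A j ∧ S.card ≤ 1 ∧
        (∑ o ∈ A i \ S, (if o.val < 3 then (2 : ℝ) else 3)) ≥
          (∑ o ∈ A j \ S, (if o.val < 3 then (2 : ℝ) else 3))) := by
  classical
  rintro ⟨A, hdisj, hind, hmax, hef1⟩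
  set w : Fin (n + 2) → ℝ := fun o => if o.val < 3 then (2 : ℝ) else 3 with hw
  have hwpos : ∀ o, (0 : ℝ) < w o := by
    intro o; simp only [hw]; split <;> norm_num
  have hw3 : ∀ o, w o ≤ 3 := by
    intro o; simp only [hw]; split <;> norm_num
  have hwleft : ∀ o : Fin (n + 2), o.val < 3 → w o = 2 := by
    intro o ho; simp only [hw, if_pos ho]
  have hwright : ∀ o : Fin (n + 2), 3 ≤ o.val → w o = 3 := by
    intro o ho; simp only [hw]; rw [if_neg (by omega)]
  by_cases hall : ∀ o : Fin (n + 2), ∃ i, o ∈ A i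
  · -- every item is allocated
    -- homogeneity of bundles
    have hom : ∀ i, ∀ x ∈ A i, ∀ y ∈ A i, x.val < 3 → y.val < 3 := by
      intro i x hx y hy hx3
      by_contra hy3
      exact hind i x hx y hy (Or.inl ⟨hx3, by omega⟩)
    -- sum of cards
    have hcover : Finset.univ.biUnion A = (Finset.univ : Finset (Fin (n + 2))) := by
      ext o
      simp only [Finset.mem_biUnion, Finset.mem_univ, true_and, iff_true]
      exact hall o
    have hdisj' : ∀ x ∈ (Finset.univ : Finset (Fin n)), ∀ y ∈ Finset.univ, x ≠ y →
        Disjoint (A x) (A y) := fun x _ y _ hxy => hdisj x y hxy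
    have hsum : ∑ i, (A i).card = n + 2 := by
      rw [← Finset.card_biUnion hdisj', hcover, Finset.card_univ, Fintype.card_fin]
    -- every bundle is nonempty
    have hne : ∀ i, (A i).Nonempty := by
      intro i
      rw [Finset.nonempty_iff_ne_empty]
      intro hemp
      have hcard1 : ∀ j, (A j).card ≤ 1 := by
        intro j
        obtain ⟨S, hS, hScard, hge⟩ := hef1 i j
        have h0 : ∑ o ∈ A i \ S, w o = 0 := by rw [hemp]; simp
        have hj : A j \ S = ∅ := by
          by_contra hne'
          have hpos := Finset.sum_pos (fun o (_ : o ∈ A j \ S) => hwpos o)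
            (Finset.nonempty_iff_ne_empty.mpr hne')
          rw [h0] at hge
          exact absurd hge (by push_neg; exact hpos)
        have hsub : A j ⊆ S := by rwa [Finset.sdiff_eq_empty_iff_subset] at hj
        exact le_trans (Finset.card_le_card hsub) hScard
      have hle : ∑ j, (A j).card ≤ ∑ _j : Fin n, 1 :=
        Finset.sum_le_sum (fun j _ => hcard1 j)
      simp only [Finset.sum_const, Finset.card_univ, Fintype.card_fin, smul_eq_mul,
        mul_one] at hle
      omega
    -- key EF1 consequence
    have key : ∀ i j, ∀ c : ℝ, 0 ≤ c → (∀ x ∈ A j, w x ≤ c) →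
        (∑ o ∈ A j, w o) - c ≤ ∑ o ∈ A i, w o := by
      intro i j c hc hcw
      obtain ⟨S, hS, hScard, hge⟩ := hef1 i j
      have h1 : ∑ o ∈ A i \ S, w o ≤ ∑ o ∈ A i, w o :=
        Finset.sum_le_sum_of_subset_of_nonneg Finset.sdiff_subset
          (fun o _ _ => (hwpos o).le)
      have h2 : ∑ o ∈ A j ∩ S, w o ≤ c := by
        calc ∑ o ∈ A j ∩ S, w o ≤ (A j ∩ S).card • c :=
              Finset.sum_le_card_nsmul _ _ _
                (fun x hx => hcw x (Finset.mem_inter.mp hx).1)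
          _ ≤ 1 * c := by
              have hc1 : (A j ∩ S).card ≤ 1 :=
                le_trans (Finset.card_le_card Finset.inter_subset_right) hScard
              rw [nsmul_eq_mul]
              exact mul_le_mul_of_nonneg_right (by exact_mod_cast hc1) hc
          _ = c := one_mul c
      have h3 : ∑ o ∈ A j ∩ S, w o + ∑ o ∈ A j \ S, w o = ∑ o ∈ A j, w o :=
        Finset.sum_inter_add_sum_sdiff (A j) S w
      have hge' : (∑ o ∈ A i \ S, w o) ≥ ∑ o ∈ A j \ S, w o := hge
      linarith
    -- counting: at most 3 items with value < 3
    have hLI : (Finset.univ.filter (fun o : Fin (n + 2) => o.val < 3)).card ≤ 3 := by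
      have hinj : Set.InjOn (fun o : Fin (n + 2) => (⟨min o.val 2, by omega⟩ : Fin 3))
          ↑(Finset.univ.filter (fun o : Fin (n + 2) => o.val < 3)) := by
        intro a ha b hb hab
        have ha' := (Finset.mem_filter.mp (Finset.mem_coe.mp ha)).2
        have hb' := (Finset.mem_filter.mp (Finset.mem_coe.mp hb)).2
        simp only [Fin.mk.injEq] at hab
        exact Fin.ext (by omega)
      have h := Finset.card_le_card_of_injOn _ (fun o _ => Finset.mem_univ _) hinj
      simpa using h
    have hRI : (Finset.univ.filter (fun o : Fin (n + 2) => 3 ≤ o.val)).card ≤ n - 1 := by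
      have hinj : Set.InjOn
          (fun o : Fin (n + 2) => (⟨o.val - 3, by have := o.isLt; omega⟩ : Fin (n - 1)))
          ↑(Finset.univ.filter (fun o : Fin (n + 2) => 3 ≤ o.val)) := by
        intro a ha b hb hab
        have ha' := (Finset.mem_filter.mp (Finset.mem_coe.mp ha)).2
        have hb' := (Finset.mem_filter.mp (Finset.mem_coe.mp hb)).2
        simp only [Fin.mk.injEq] at hab
        exact Fin.ext (by omega)
      have h := Finset.card_le_card_of_injOn _ (fun o _ => Finset.mem_univ _) hinj
      simpa using h
    -- owner of item 0
    obtain ⟨k, hk⟩ := hall ⟨0, by omega⟩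
    have hkleft : ∀ x ∈ A k, x.val < 3 :=
      fun x hx => hom k ⟨0, by omega⟩ hk x hx (by norm_num)
    by_cases hB : ∃ k', (∀ x ∈ A k', x.val < 3) ∧ k' ≠ k
    · -- two distinct "left" agents : small left bundle and big right bundle
      obtain ⟨k', hk'left, hk'ne⟩ := hB
      have hdkk : Disjoint (A k) (A k') := hdisj k k' (Ne.symm hk'ne)
      have hunion : A k ∪ A k' ⊆ Finset.univ.filter (fun o : Fin (n + 2) => o.val < 3) := by
        intro x hx
        rcases Finset.mem_union.mp hx with h | h
        · exact Finset.mem_filter.mpr ⟨Finset.mem_univ _, hkleft x h⟩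
        · exact Finset.mem_filter.mpr ⟨Finset.mem_univ _, hk'left x h⟩
      have hcards : (A k).card + (A k').card ≤ 3 := by
        rw [← Finset.card_union_of_disjoint hdkk]
        exact le_trans (Finset.card_le_card hunion) hLI
      have hk1 : 1 ≤ (A k).card := Finset.card_pos.mpr (hne k)
      have hk'1 : 1 ≤ (A k').card := Finset.card_pos.mpr (hne k')
      -- some left agent p with a singleton bundle
      obtain ⟨p, hpleft, hpcard⟩ : ∃ p, (∀ x ∈ A p, x.val < 3) ∧ (A p).card = 1 := by
        rcases (by omega : (A k).card = 1 ∨ (A k').card = 1) with h | h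
        · exact ⟨k, hkleft, h⟩
        · exact ⟨k', hk'left, h⟩
      obtain ⟨xp, hxp⟩ := Finset.card_eq_one.mp hpcard
      have hvp : ∑ o ∈ A p, w o = 2 := by
        rw [hxp, Finset.sum_singleton, hwleft xp (hpleft xp (by simp [hxp]))]
      -- left agents
      set Lset : Finset (Fin n) := Finset.univ.filter (fun i => ∀ x ∈ A i, x.val < 3)
        with hLset
      have hkL : k ∈ Lset := Finset.mem_filter.mpr ⟨Finset.mem_univ _, hkleft⟩
      have hk'L : k' ∈ Lset := Finset.mem_filter.mpr ⟨Finset.mem_univ _, hk'left⟩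
      have hLcard : 2 ≤ Lset.card := Finset.one_lt_card.mpr ⟨k', hk'L, k, hkL, hk'ne⟩
      have hLsum : ∑ i ∈ Lset, (A i).card ≤ 3 := by
        rw [← Finset.card_biUnion (fun x _ y _ hxy => hdisj x y hxy)]
        refine le_trans (Finset.card_le_card ?_) hLI
        intro x hx
        obtain ⟨i, hiL, hxi⟩ := Finset.mem_biUnion.mp hx
        exact Finset.mem_filter.mpr ⟨Finset.mem_univ _,
          (Finset.mem_filter.mp hiL).2 x hxi⟩
      have hsplit : ∑ i ∈ Lset, (A i).card +
          ∑ i ∈ Finset.univ.filter (fun i => ¬ ∀ x ∈ A i, x.val < 3), (A i).card =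
          n + 2 := by
        rw [Finset.sum_filter_add_sum_filter_not]
        exact hsum
      have hcardsplit : Lset.card +
          (Finset.univ.filter (fun i => ¬ ∀ x ∈ A i, x.val < 3)).card = n := by
        rw [Finset.card_filter_add_card_filter_not, Finset.card_univ,
          Fintype.card_fin]
      -- some right agent with at least 2 items
      obtain ⟨j, hjR, hj2⟩ : ∃ j ∈ Finset.univ.filter (fun i => ¬ ∀ x ∈ A i, x.val < 3),
          2 ≤ (A j).card := by
        by_contra hcon0
        have hcon : ∀ x ∈ Finset.univ.filter (fun i => ¬ ∀ x ∈ A i, x.val < 3),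
            (A x).card ≤ 1 := by
          intro x hx
          by_contra h2
          exact hcon0 ⟨x, hx, by omega⟩
        have hle := Finset.sum_le_card_nsmul _ _ 1 hcon
        simp only [smul_eq_mul, mul_one] at hle
        omega
      have hjright : ∀ x ∈ A j, 3 ≤ x.val := by
        have hjn := (Finset.mem_filter.mp hjR).2
        intro x hx
        by_contra hx3
        exact hjn (fun y hy => hom j x hx y hy (by omega))
      obtain ⟨a, ha, b, hb, hab⟩ := Finset.one_lt_card.mp (by omega : 1 < (A j).card)
      have hvj : (6 : ℝ) ≤ ∑ o ∈ A j, w o := by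
        have hsub : ({a, b} : Finset (Fin (n + 2))) ⊆ A j := by
          intro x hx
          rcases Finset.mem_insert.mp hx with h | h
          · exact h ▸ ha
          · exact (Finset.mem_singleton.mp h) ▸ hb
        have hpair : ∑ o ∈ ({a, b} : Finset (Fin (n + 2))), w o = 6 := by
          rw [Finset.sum_pair hab, hwright a (hjright a ha), hwright b (hjright b hb)]
          norm_num
        calc (6 : ℝ) = ∑ o ∈ ({a, b} : Finset (Fin (n + 2))), w o := hpair.symm
          _ ≤ ∑ o ∈ A j, w o :=
            Finset.sum_le_sum_of_subset_of_nonneg hsub (fun o _ _ => (hwpos o).le)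
      have hkey := key p j 3 (by norm_num) (fun x _ => hw3 x)
      rw [hvp] at hkey
      linarith
    · -- k is the only left agent
      push_neg at hB
      have hB' : ∀ k', (∀ x ∈ A k', x.val < 3) → k' = k := fun k' h => hB k' h
      -- items 0,1,2 all belong to A k
      have hmem : ∀ m : ℕ, (hm : m < 3) → (⟨m, by omega⟩ : Fin (n + 2)) ∈ A k := by
        intro m hm
        obtain ⟨i, hi⟩ := hall ⟨m, by omega⟩
        have hileft : ∀ x ∈ A i, x.val < 3 :=
          fun x hx => hom i ⟨m, by omega⟩ hi x hx (by simpa using hm)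
        have := hB' i hileft
        exact this ▸ hi
      have hvk : (6 : ℝ) ≤ ∑ o ∈ A k, w o := by
        set x0 : Fin (n + 2) := ⟨0, by omega⟩
        set x1 : Fin (n + 2) := ⟨1, by omega⟩
        set x2 : Fin (n + 2) := ⟨2, by omega⟩
        have hsub : ({x0, x1, x2} : Finset (Fin (n + 2))) ⊆ A k := by
          intro x hx
          rcases Finset.mem_insert.mp hx with h | hx
          · exact h ▸ hmem 0 (by omega)
          rcases Finset.mem_insert.mp hx with h | hx
          · exact h ▸ hmem 1 (by omega)
          · exact (Finset.mem_singleton.mp hx) ▸ hmem 2 (by omega)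
        have htriple : ∑ o ∈ ({x0, x1, x2} : Finset (Fin (n + 2))), w o = 6 := by
          rw [Finset.sum_insert (by simp [x0, x1, x2, Fin.ext_iff]),
            Finset.sum_insert (by simp [x1, x2, Fin.ext_iff]),
            Finset.sum_singleton,
            hwleft x0 (by simp [x0]), hwleft x1 (by simp [x1]), hwleft x2 (by simp [x2])]
          norm_num
        calc (6 : ℝ) = ∑ o ∈ ({x0, x1, x2} : Finset (Fin (n + 2))), w o := htriple.symm
          _ ≤ ∑ o ∈ A k, w o :=
            Finset.sum_le_sum_of_subset_of_nonneg hsub (fun o _ _ => (hwpos o).le)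
      -- every other agent is right, with a singleton bundle
      have hright : ∀ j, j ≠ k → ∀ x ∈ A j, 3 ≤ x.val := by
        intro j hjk x hx
        by_contra hx3
        exact hjk (hB' j (fun y hy => hom j x hx y hy (by omega)))
      have hRsum : ∑ i ∈ Finset.univ.erase k, (A i).card ≤ n - 1 := by
        rw [← Finset.card_biUnion (fun x _ y _ hxy => hdisj x y hxy)]
        refine le_trans (Finset.card_le_card ?_) hRI
        intro x hx
        obtain ⟨i, hiL, hxi⟩ := Finset.mem_biUnion.mp hx
        exact Finset.mem_filter.mpr ⟨Finset.mem_univ _,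
          hright i (Finset.mem_erase.mp hiL).1 x hxi⟩
      have hRcard : (Finset.univ.erase k).card = n - 1 := by
        rw [Finset.card_erase_of_mem (Finset.mem_univ _), Finset.card_univ,
          Fintype.card_fin]
      -- all bundles of agents ≠ k are singletons
      have hsingle : ∀ j ∈ Finset.univ.erase k, (A j).card = 1 := by
        intro j hj
        by_contra hcon
        have h2 : 2 ≤ (A j).card := by
          have := Finset.card_pos.mpr (hne j); omega
        have hlt : ∑ _i ∈ Finset.univ.erase k, 1 < ∑ i ∈ Finset.univ.erase k, (A i).card :=
          Finset.sum_lt_sum (fun i _ => Finset.card_pos.mpr (hne i))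
            ⟨j, hj, by omega⟩
        simp only [Finset.sum_const, smul_eq_mul, mul_one] at hlt
        omega
      -- pick some agent ≠ k
      have hnonempty : (Finset.univ.erase k).Nonempty := by
        rw [← Finset.card_pos, hRcard]; omega
      obtain ⟨j, hj⟩ := hnonempty
      obtain ⟨xj, hxj⟩ := Finset.card_eq_one.mp (hsingle j hj)
      have hvj : ∑ o ∈ A j, w o = 3 := by
        rw [hxj, Finset.sum_singleton,
          hwright xj (hright j (Finset.mem_erase.mp hj).1 xj (by simp [hxj]))]
      have hkey := key j k 2 (by norm_num)
        (fun x hx => le_of_eq (hwleft x (hkleft x hx)))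
      rw [hvj] at hkey
      linarith
  · -- some item is unallocated
    push_neg at hall
    obtain ⟨o, ho⟩ := hall
    have h := hmax o ho
    by_cases h3 : o.val < 3
    · -- each bundle contains an item ≥ 3 ; injection Fin n ↪ Fin (n-1)
      choose x hx1 hx2 using h
      have hx3 : ∀ i, 3 ≤ (x i).val := by
        intro i
        rcases hx2 i with ⟨_, h⟩ | ⟨_, h⟩
        · exact h
        · omega
      have hinj : Function.Injective
          (fun i => (⟨(x i).val - 3, by have := (x i).isLt; omega⟩ : Fin (n - 1))) := by
        intro i j hij
        have hval : (x i).val = (x j).val := by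
          simp only [Fin.mk.injEq] at hij
          have := hx3 i; have := hx3 j; omega
        have hxx : x i = x j := Fin.ext hval
        by_contra hne
        exact Finset.disjoint_left.mp (hdisj i j hne) (hx1 i) (hxx ▸ hx1 j)
      have hcard := Fintype.card_le_of_injective _ hinj
      simp only [Fintype.card_fin] at hcard
      omega
    · -- each bundle contains an item < 3 ; injection Fin n ↪ Fin 3
      choose x hx1 hx2 using h
      have hx3 : ∀ i, (x i).val < 3 := by
        intro i
        rcases hx2 i with ⟨h', _⟩ | ⟨h', _⟩
        · omega
        · exact h'
      have hinj : Function.Injective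
          (fun i => (⟨(x i).val, hx3 i⟩ : Fin 3)) := by
        intro i j hij
        have hval : (x i).val = (x j).val := by
          simp only [Fin.mk.injEq] at hij
          exact hij
        have hxx : x i = x j := Fin.ext hval
        by_contra hne
        exact Finset.disjoint_left.mp (hdisj i j hne) (hx1 i) (hxx ▸ hx1 j)
      have hcard := Fintype.card_le_of_injective _ hinj
      simp only [Fintype.card_fin] at hcard
      omega
end

section
/- For every integer n ≥ 2, consider n agents and n items o_1,...,o_n whose conflict graph is the complete graph K_n on the items. All agents share the additive valuation v with v(o_i) = 1 for i = 1,...,n−1 and v(o_n) = −1. Then no allocation (A_1,...,A_n) is both maximal and EF1. -/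
/-- for n ≥ 2 agents and n items on the complete conflict graph K_n, with
identical additive valuation giving value 1 to the first n - 1 items (goods) and -1 to the
last item (a chore), no allocation is both maximal and EF1. -/
theorem stmt_15 (n : ℕ) (hn : 2 ≤ n) :
    ¬ ∃ A : Fin n → Finset (Fin n),
      (∀ i j : Fin n, i ≠ j → Disjoint (A i) (A j)) ∧
      (∀ i : Fin n, ∀ x ∈ A i, ∀ y ∈ A i, ¬ x ≠ y) ∧
      (∀ o : Fin n, (∀ i : Fin n, o ∉ A i) → ∀ i : Fin n, ∃ x ∈ A i, o ≠ x) ∧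
      (∀ i j : Fin n, ∃ S : Finset (Fin n), S ⊆ A i ∪ A j ∧ S.card ≤ 1 ∧
        (∑ o ∈ A i \ S, (if o.val + 1 = n then (-1 : ℝ) else 1)) ≥
          (∑ o ∈ A j \ S, (if o.val + 1 = n then (-1 : ℝ) else 1))) := by
  rintro ⟨A, hdisj, hind, hmax, hef⟩
  have halloc : ∀ o : Fin n, ∃ i, o ∈ A i := by
    by_contra h
    push_neg at h
    obtain ⟨o, ho⟩ := h
    have hne : ∀ i, (A i).Nonempty := fun i => by
      obtain ⟨x, hx, _⟩ := hmax o ho i; exact ⟨x, hx⟩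
    choose g hg using hne
    have hginj : Function.Injective g := by
      intro i j hij
      by_contra hne'
      exact Finset.disjoint_left.mp (hdisj i j hne') (hg i) (hij ▸ hg j)
    obtain ⟨i, hi⟩ := (Finite.injective_iff_surjective.mp hginj) o
    exact ho i (hi ▸ hg i)
  choose f hf using halloc
  have hA : ∀ o, A (f o) = {o} := fun o =>
    Finset.eq_singleton_iff_unique_mem.mpr
      ⟨hf o, fun x hx => not_not.mp (hind (f o) x hx o (hf o))⟩
  set c : Fin n := ⟨n - 1, by omega⟩ with hc_def
  set z : Fin n := ⟨0, by omega⟩ with hz_def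
  have hcz : c ≠ z := by
    simp [hc_def, hz_def, Fin.ext_iff]
    omega
  obtain ⟨S, hS, hScard, hsum⟩ := hef (f c) (f z)
  rw [hA c, hA z] at hsum
  have hcval : c.val + 1 = n := by simp [hc_def]; omega
  have hzval : ¬ (z.val + 1 = n) := by simp [hz_def]; omega
  by_cases hz : z ∈ S
  · have hcS : c ∉ S := fun hcS => hcz (Finset.card_le_one.mp hScard c hcS z hz)
    have h1 : ({c} : Finset (Fin n)) \ S = {c} := by
      ext x; simp only [Finset.mem_sdiff, Finset.mem_singleton, and_iff_left_iff_imp]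
      rintro rfl; exact hcS
    have h2 : ({z} : Finset (Fin n)) \ S = ∅ := by
      ext x; simp only [Finset.mem_sdiff, Finset.mem_singleton, Finset.notMem_empty, iff_false,
        not_and, not_not]
      rintro rfl; exact hz
    rw [h1, h2] at hsum
    simp [hcval] at hsum
    linarith
  · have h2 : ({z} : Finset (Fin n)) \ S = {z} := by
      ext x; simp only [Finset.mem_sdiff, Finset.mem_singleton, and_iff_left_iff_imp]
      rintro rfl; exact hz
    rw [h2] at hsum
    by_cases hcS : c ∈ S
    · have h1 : ({c} : Finset (Fin n)) \ S = ∅ := by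
        ext x; simp only [Finset.mem_sdiff, Finset.mem_singleton, Finset.notMem_empty, iff_false,
          not_and, not_not]
        rintro rfl; exact hcS
      rw [h1] at hsum
      simp [hzval] at hsum
      linarith
    · have h1 : ({c} : Finset (Fin n)) \ S = {c} := by
        ext x; simp only [Finset.mem_sdiff, Finset.mem_singleton, and_iff_left_iff_imp]
        rintro rfl; exact hcS
      rw [h1] at hsum
      simp [hcval, hzval] at hsum
      linarith
end

section
/- For every finite tree T = (V, E) and every positive integer n, there exists a maximal equitable n-coloring of T, i.e., pairwise disjoint subsets S_1,...,S_n of V such that each S_i is an independent set of T, every vertex v ∈ V \ (S_1 ∪ ... ∪ S_n) has a neighbor in S_i for every i ∈ {1,...,n}, and max_{i∈{1,...,n}} |S_i| − min_{i∈{1,...,n}} |S_i| ≤ 1. -/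
open Finset SimpleGraph

namespace Stmt18Aux


def Bal {n : ℕ} (t : Fin n → ℕ) : Prop := ∀ i j, t i ≤ t j + 1

lemma bal_addMin {n : ℕ} {t : Fin n → ℕ} (h : Bal t) (i0 : Fin n)
    (hmin : ∀ j, t i0 ≤ t j) :
    Bal (fun i => t i + if i = i0 then 1 else 0) := by
  intro i j
  have h1 := h i j
  have h2 := h i i0
  have h3 := hmin j
  by_cases hi : i = i0 <;> by_cases hj : j = i0 <;> simp [hi, hj] at * <;> omega

lemma lemB {n : ℕ} (hn : 0 < n) (s : Fin n → ℕ) (hs : Bal s) (d : ℕ) (hd : n ≤ d) :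
    ∃ c : Fin n → ℕ, (∀ i, 1 ≤ c i) ∧ (∑ i, c i = d) ∧ Bal (fun i => s i + c i) := by
  induction d, hd using Nat.le_induction with
  | base =>
    refine ⟨fun _ => 1, fun _ => le_refl 1, by simp, fun i j => by have := hs i j; dsimp only; omega⟩
  | succ d hd ih =>
    obtain ⟨c, h1, h2, h3⟩ := ih
    obtain ⟨i0, -, hi0⟩ := Finset.exists_min_image univ (fun i => s i + c i)
      ⟨⟨0, hn⟩, mem_univ _⟩
    refine ⟨fun i => c i + if i = i0 then 1 else 0, fun i => le_add_right (h1 i), ?_, ?_⟩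
    · rw [Finset.sum_add_distrib, h2]
      simp
    · have hb := bal_addMin h3 i0 (fun j => hi0 j (mem_univ j))
      intro i j
      have := hb i j
      simp only at this ⊢
      omega




lemma lemA {n : ℕ} (s : Fin n → ℕ) (hs : Bal s) (F : Finset (Fin n)) (hF : F.card ≤ 1)
    (d : ℕ) (hd1 : 1 ≤ d) (hdn : d + 1 ≤ n) :
    ∃ i0 : Fin n, ∃ D : Finset (Fin n), i0 ∈ D ∧ i0 ∉ F ∧ D.card = d + 1 ∧
      Bal (fun i => s i + if i ∈ D then 1 else 0) := by
  classical
  have hn : 0 < n := by omega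
  obtain ⟨im, -, him⟩ := Finset.exists_min_image univ s ⟨⟨0, hn⟩, mem_univ _⟩
  set m := s im with hm
  have hmle : ∀ j, m ≤ s j := fun j => him j (mem_univ j)
  have hlem1 : ∀ j, s j ≤ m + 1 := fun j => hs j im
  set Lo := univ.filter (fun i => s i = m) with hLo
  have hmemLo : ∀ i, i ∈ Lo ↔ s i = m := by
    intro i; simp [hLo]
  -- choose D
  have hgetD : ∃ D : Finset (Fin n), D.card = d + 1 ∧
      ((∀ i ∈ D, s i = m) ∨ Lo ⊆ D) := by
    by_cases hk : d + 1 ≤ Lo.card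
    · obtain ⟨D, hDLo, hDcard⟩ := Finset.exists_subset_card_eq (s := Lo) (n := d + 1) hk
      exact ⟨D, hDcard, Or.inl (fun i hi => (hmemLo i).mp (hDLo hi))⟩
    · have hLocard : Lo.card ≤ n := by
        calc Lo.card ≤ (univ : Finset (Fin n)).card := card_le_card (filter_subset _ _)
        _ = n := by simp
      obtain ⟨E, hE, hEcard⟩ := Finset.exists_subset_card_eq (s := univ \ Lo) (n := d + 1 - Lo.card)
        (by rw [card_sdiff_of_subset (subset_univ _)]; simp; omega)
      refine ⟨Lo ∪ E, ?_, Or.inr subset_union_left⟩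
      have hdLoE : Disjoint Lo E := Finset.disjoint_left.mpr (fun x hx hxE => by
        have := hE hxE
        rw [Finset.mem_sdiff] at this
        exact this.2 hx)
      rw [card_union_of_disjoint hdLoE]
      omega
  obtain ⟨D, hDcard, hDtype⟩ := hgetD
  have hDF : (D \ F).Nonempty := by
    rw [← card_pos, ]
    have := card_le_card_sdiff_add_card (s := D) (t := F)
    omega
  obtain ⟨i0, hi0⟩ := hDF
  rw [mem_sdiff] at hi0
  refine ⟨i0, D, hi0.1, hi0.2, hDcard, ?_⟩
  intro i j
  dsimp only
  rcases hDtype with hD | hD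
  · by_cases hi : i ∈ D
    · have : s i = m := hD i hi
      have := hmle j
      simp [hi]; omega
    · have := hs i j
      simp [hi]; omega
  · have hjD : m + 1 ≤ s j + if j ∈ D then 1 else 0 := by
      by_cases hj : j ∈ Lo
      · have h1 : s j = m := (hmemLo j).mp hj
        have : j ∈ D := hD hj
        simp [this]; omega
      · have : ¬ s j = m := by simpa [hmemLo] using hj
        have := hmle j
        by_cases hjd : j ∈ D <;> simp [hjd] <;> omega
    by_cases hi : i ∈ D
    · have := hlem1 i
      simp [hi]; omega
    · have := hlem1 i
      simp [hi]; omega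

variable {V : Type*} [DecidableEq V]

lemma exists_partition_aux {n : ℕ} (t : Finset (Fin n)) :
    ∀ (L : Finset V) (c : Fin n → ℕ), (∑ i ∈ t, c i) ≤ L.card →
    ∃ P : Fin n → Finset V, (∀ i, P i ⊆ L) ∧ (∀ i ∈ t, (P i).card = c i) ∧
      (∀ i ∉ t, P i = ∅) ∧ (∀ i j, i ≠ j → Disjoint (P i) (P j)) := by
  induction t using Finset.cons_induction with
  | empty =>
    intro L c _
    exact ⟨fun _ => ∅, by simp, by simp, by simp, by simp⟩
  | cons a t ha ih =>
    intro L c h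
    rw [Finset.sum_cons] at h
    obtain ⟨Q, hQL, hQcard⟩ := Finset.exists_subset_card_eq (s := L) (n := c a)
      (le_trans (Nat.le_add_right _ _) h)
    obtain ⟨P, h1, h2, h3, h4⟩ := ih (L \ Q) c (by rw [card_sdiff_of_subset hQL]; omega)
    refine ⟨Function.update P a Q, ?_, ?_, ?_, ?_⟩
    · intro i
      rcases eq_or_ne i a with rfl | hi
      · simpa using hQL
      · rw [Function.update_of_ne hi]
        exact (h1 i).trans (sdiff_subset)
    · intro i hi
      rcases eq_or_ne i a with rfl | hne
      · simpa using hQcard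
      · rw [Function.update_of_ne hne]
        exact h2 i (by simpa [hne] using hi)
    · intro i hi
      have hia : i ≠ a := by rintro rfl; exact hi (mem_cons_self _ _)
      rw [Function.update_of_ne hia]
      exact h3 i (fun hit => hi (Finset.mem_cons_of_mem hit))
    · intro i j hij
      rcases eq_or_ne i a with rfl | hia
      · rw [Function.update_self, Function.update_of_ne hij.symm]
        exact disjoint_sdiff.mono_right (h1 j)
      · rw [Function.update_of_ne hia]
        rcases eq_or_ne j a with rfl | hja
        · rw [Function.update_self]
          exact (disjoint_sdiff.mono_right (h1 i)).symm
        · rw [Function.update_of_ne hja]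
          exact h4 i j hij

lemma exists_partition {n : ℕ} (L : Finset V) (c : Fin n → ℕ) (h : ∑ i, c i = L.card) :
    ∃ P : Fin n → Finset V, (∀ i, P i ⊆ L) ∧ (∀ i, (P i).card = c i) ∧
      (∀ i j, i ≠ j → Disjoint (P i) (P j)) ∧ (∀ x ∈ L, ∃ i, x ∈ P i) := by
  obtain ⟨P, h1, h2, h3, h4⟩ := exists_partition_aux univ L c h.le
  have h2' : ∀ i, (P i).card = c i := fun i => h2 i (mem_univ i)
  refine ⟨P, h1, h2', h4, ?_⟩
  have hU : univ.biUnion P = L := by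
    apply Finset.eq_of_subset_of_card_le
    · intro x hx
      rw [Finset.mem_biUnion] at hx
      obtain ⟨i, -, hi⟩ := hx
      exact h1 i hi
    · rw [Finset.card_biUnion (fun i _ j _ hij => h4 i j hij)]
      simp only [h2']
      omega
  intro x hx
  rw [← hU] at hx
  rw [Finset.mem_biUnion] at hx
  obtain ⟨i, -, hi⟩ := hx
  exact ⟨i, hi⟩



variable [Fintype V]

lemma path2 {G : SimpleGraph V} {x y z : V} (h1 : G.Adj x y) (h2 : G.Adj y z) (hxz : x ≠ z) :
    (Walk.cons h1 (Walk.cons h2 Walk.nil)).IsPath := by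
  simp [Walk.cons_isPath_iff, h1.ne, h2.ne, hxz]

lemma penult (G : SimpleGraph V) (hG : G.IsAcyclic)
    (A : Finset V) (hA : A.Nonempty) (hdeg : ∀ x ∈ A, ∃ y ∈ A, G.Adj x y) :
    ∃ u ∈ A, ∃ Wf : Finset V, Wf ⊆ A ∧ Wf.card ≤ 1 ∧ (∀ x ∈ Wf, G.Adj u x) ∧
      (∃ x ∈ A, G.Adj u x ∧ x ∉ Wf) ∧
      (∀ x ∈ A, G.Adj u x → x ∉ Wf → ∀ y ∈ A, G.Adj x y → y = u) := by
  classical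
  set N := Fintype.card V with hN
  set Pred : ℕ → Prop := fun k => ∃ (a : V) (b : V) (p : G.Walk a b), p.IsPath ∧
    (∀ z ∈ p.support, z ∈ A) ∧ p.length = k with hPred
  have hP1 : Pred 1 := by
    obtain ⟨x, hx⟩ := hA
    obtain ⟨y, hy, hxy⟩ := hdeg x hx
    refine ⟨x, y, Walk.cons hxy Walk.nil, ?_, ?_, rfl⟩
    · simp [Walk.cons_isPath_iff, hxy.ne]
    · intro z hz
      simp only [Walk.support_cons, Walk.support_nil, List.mem_cons, List.mem_singleton,
        List.not_mem_nil, or_false] at hz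
      rcases hz with rfl | rfl
      · exact hx
      · exact hy
  have hbound : ∀ k, Pred k → k ≤ N := by
    rintro k ⟨a, b, p, hp, -, rfl⟩
    exact hp.length_lt.le
  set K := Nat.findGreatest Pred N with hK
  have hPK : Pred K := Nat.findGreatest_spec (hbound 1 hP1) hP1
  have hKmax : ∀ k, Pred k → k ≤ K := fun k hk => Nat.le_findGreatest (hbound k hk) hk
  have hK1 : 1 ≤ K := hKmax 1 hP1
  obtain ⟨a, b, p, hp, hsupp, hlen⟩ := hPK
  obtain ⟨u, h, q, rfl⟩ : ∃ (u : V) (h : G.Adj a u) (q : G.Walk u b),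
      p = Walk.cons h q := by
    cases p with
    | nil => simp at hlen; omega
    | cons h q => exact ⟨_, h, q, rfl⟩
  rw [Walk.cons_isPath_iff] at hp
  obtain ⟨hq, haq⟩ := hp
  have haA : a ∈ A := hsupp a (by simp [Walk.support_cons])
  have hqsupp : ∀ z ∈ q.support, z ∈ A := fun z hz =>
    hsupp z (by simp [Walk.support_cons, hz])
  have huA : u ∈ A := hqsupp u q.start_mem_support
  have hlenq : q.length + 1 = K := by simpa using hlen
  -- T0 : anything in A adjacent to a lies on the path
  have T0 : ∀ z ∈ A, G.Adj z a → z ∈ (Walk.cons h q).support := by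
    intro z hz hza
    by_contra hzs
    have hpath : (Walk.cons hza (Walk.cons h q)).IsPath :=
      (Walk.cons_isPath_iff _ _).mpr ⟨(Walk.cons_isPath_iff _ _).mpr ⟨hq, haq⟩, hzs⟩
    have : Pred (K + 1) := by
      refine ⟨z, b, _, hpath, ?_, by simp; omega⟩
      intro t ht
      simp only [Walk.support_cons, List.mem_cons] at ht
      rcases ht with rfl | rfl | ht
      · exact hz
      · exact haA
      · exact hqsupp t ht
    have := hKmax _ this
    omega
  -- T1 : extension through x outside the path
  have T1 : ∀ x y, x ∈ A → y ∈ A → G.Adj u x → G.Adj x y →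
      x ∉ (Walk.cons h q).support → y ∈ (Walk.cons h q).support := by
    intro x y hxA hyA hux hxy hxs
    by_contra hys
    have hxq : x ∉ q.support := fun hc => hxs (by simp [Walk.support_cons, hc])
    have hyq : y ∉ q.support := fun hc => hys (by simp [Walk.support_cons, hc])
    have hpath1 : (Walk.cons hux.symm q).IsPath := (Walk.cons_isPath_iff _ _).mpr ⟨hq, hxq⟩
    have hpath : (Walk.cons hxy.symm (Walk.cons hux.symm q)).IsPath :=
      (Walk.cons_isPath_iff _ _).mpr ⟨hpath1, by
        simp only [Walk.support_cons, List.mem_cons]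
        push_neg
        exact ⟨fun hc => hxy.ne' hc, hyq⟩⟩
    have : Pred (K + 1) := by
      refine ⟨y, b, _, hpath, ?_, by simp; omega⟩
      intro t ht
      simp only [Walk.support_cons, List.mem_cons] at ht
      rcases ht with rfl | rfl | ht
      · exact hyA
      · exact hxA
      · exact hqsupp t ht
    have := hKmax _ this
    omega
  -- T2 : a path-member adjacent to u must be the second vertex of q
  have T2 : ∀ x, x ∈ q.support → x ≠ u → G.Adj u x →
      ∃ (e : G.Adj u x) (r : G.Walk x b), q = Walk.cons e r := by
    intro x hxq hxu hux
    have ht : (q.takeUntil x hxq).IsPath := hq.takeUntil hxq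
    have hsing : (Path.singleton hux : G.Walk u x) = q.takeUntil x hxq := by
      have := hG.path_unique (Path.singleton hux) ⟨q.takeUntil x hxq, ht⟩
      exact congrArg Subtype.val this
    refine ⟨hux, q.dropUntil x hxq, ?_⟩
    have hspec := q.take_spec hxq
    conv_lhs => rw [← hspec, ← hsing]
    simp [Path.singleton]
  have hpfull : (Walk.cons h q).IsPath := (Walk.cons_isPath_iff _ _).mpr ⟨hq, haq⟩
  refine ⟨u, huA, ?_⟩
  cases q with
  | nil =>
    refine ⟨∅, empty_subset _, by simp, by simp, ⟨a, haA, h.symm, by simp⟩, ?_⟩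
    intro x hxA hux _ y hyA hxy
    by_contra hyu
    have hxu : x ≠ b := hux.ne'
    by_cases hxa : x = a
    · subst hxa
      have hysup := T0 y hyA hxy.symm
      simp only [Walk.support_cons, Walk.support_nil, List.mem_cons, List.mem_singleton,
        List.not_mem_nil, or_false] at hysup
      rcases hysup with rfl | rfl
      · exact hxy.ne rfl
      · exact hyu rfl
    · have hxs : x ∉ (Walk.cons h Walk.nil).support := by
        simp [Walk.support_cons, Walk.support_nil, hxa, hxu]
      have hys := T1 x y hxA hyA hux hxy hxs
      simp only [Walk.support_cons, Walk.support_nil, List.mem_cons, List.mem_singleton,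
        List.not_mem_nil, or_false] at hys
      rcases hys with rfl | rfl
      · -- y = a : two paths a → u
        have hthis := hG.path_unique (Path.singleton h) ⟨_, path2 hxy.symm hux.symm h.ne⟩
        have hw := congrArg Subtype.val hthis
        have := congrArg Walk.length hw
        simp [Path.singleton] at this
      · exact hyu rfl
  | cons h2 q2 =>
    rename_i w
    have hwq : w ∈ (Walk.cons h2 q2).support := by
      rw [Walk.support_cons, List.mem_cons]
      exact Or.inr q2.start_mem_support
    have hwA : w ∈ A := hqsupp w hwq
    have haw : a ≠ w := fun hc => haq (hc ▸ hwq)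
    refine ⟨{w}, by simpa using hwA, by simp, by simp [h2], ⟨a, haA, h.symm, by simp [haw]⟩, ?_⟩
    intro x hxA hux hxW y hyA hxy
    by_contra hyu
    have hxw : x ≠ w := by simpa using hxW
    have hxu : x ≠ u := hux.ne'
    by_cases hxa : x = a
    · subst hxa
      have hyp : y ∈ (Walk.cons h (Walk.cons h2 q2)).support := T0 y hyA hxy.symm
      have hthis := hG.path_unique (Path.singleton hxy)
        ⟨_, hpfull.takeUntil hyp⟩
      have hw : (Path.singleton hxy : G.Walk _ _) =
          (Walk.cons h (Walk.cons h2 q2)).takeUntil y hyp := congrArg Subtype.val hthis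
      have hspec := (Walk.cons h (Walk.cons h2 q2)).take_spec hyp
      rw [← hw] at hspec
      simp only [Path.singleton, Walk.cons_append, Walk.nil_append] at hspec
      have hs := congrArg Walk.support hspec
      rw [Walk.support_cons, Walk.support_cons,
        Walk.support_eq_cons ((Walk.cons h (Walk.cons h2 q2)).dropUntil y hyp)] at hs
      simp only [List.cons.injEq] at hs
      rw [Walk.support_cons] at hs
      simp only [List.cons.injEq] at hs
      exact hyu hs.2.1
    · have hxs : x ∉ (Walk.cons h (Walk.cons h2 q2)).support := by
        intro hc
        rw [Walk.support_cons, List.mem_cons] at hc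
        rcases hc with rfl | hc
        · exact hxa rfl
        · obtain ⟨e, r, hqe⟩ := T2 x hc hxu hux
          have hs := congrArg Walk.support hqe
          rw [Walk.support_cons, Walk.support_cons, Walk.support_eq_cons q2,
            Walk.support_eq_cons r] at hs
          simp only [List.cons.injEq] at hs
          exact hxw hs.2.1.symm
      have hys := T1 x y hxA hyA hux hxy hxs
      rw [Walk.support_cons, List.mem_cons] at hys
      rcases hys with rfl | hyq
      · have hthis := hG.path_unique (Path.singleton h.symm) ⟨_, path2 hux hxy h.ne'⟩
        have hw := congrArg Subtype.val hthis
        have := congrArg Walk.length hw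
        simp [Path.singleton] at this
      · have hyu' : u ≠ y := fun hc => hyu hc.symm
        have hthis := hG.path_unique ⟨_, path2 hux hxy hyu'⟩
          ⟨(Walk.cons h2 q2).takeUntil y hyq, hq.takeUntil hyq⟩
        have hw : (Walk.cons hux (Walk.cons hxy Walk.nil) : G.Walk u y) =
            (Walk.cons h2 q2).takeUntil y hyq := congrArg Subtype.val hthis
        have hxt : x ∈ ((Walk.cons h2 q2).takeUntil y hyq).support := by
          rw [← hw]
          simp [Walk.support_cons]
        have hxq2 : x ∈ (Walk.cons h2 q2).support :=
          (Walk.support_takeUntil_subset _ hyq) hxt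
        exact hxs (by rw [Walk.support_cons]; exact List.mem_cons_of_mem _ hxq2)




lemma aux (G : SimpleGraph V) (hG : G.IsAcyclic)
    (penult : ∀ (A : Finset V), A.Nonempty → (∀ x ∈ A, ∃ y ∈ A, G.Adj x y) →
      ∃ u ∈ A, ∃ Wf : Finset V, Wf ⊆ A ∧ Wf.card ≤ 1 ∧ (∀ x ∈ Wf, G.Adj u x) ∧
      (∃ x ∈ A, G.Adj u x ∧ x ∉ Wf) ∧
      (∀ x ∈ A, G.Adj u x → x ∉ Wf → ∀ y ∈ A, G.Adj x y → y = u))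
    (lemB : ∀ (n : ℕ), 0 < n → ∀ (s : Fin n → ℕ), (∀ i j, s i ≤ s j + 1) → ∀ (d : ℕ), n ≤ d →
      ∃ c : Fin n → ℕ, (∀ i, 1 ≤ c i) ∧ (∑ i, c i = d) ∧ ∀ i j, s i + c i ≤ s j + c j + 1)
    (lemA : ∀ (n : ℕ) (s : Fin n → ℕ), (∀ i j, s i ≤ s j + 1) →
      ∀ (F : Finset (Fin n)), F.card ≤ 1 → ∀ (d : ℕ), 1 ≤ d → d + 1 ≤ n →
      ∃ i0 : Fin n, ∃ D : Finset (Fin n), i0 ∈ D ∧ i0 ∉ F ∧ D.card = d + 1 ∧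
        ∀ i j, (s i + if i ∈ D then 1 else 0) ≤ (s j + if j ∈ D then 1 else 0) + 1)
    (expart : ∀ (n : ℕ) (L : Finset V) (c : Fin n → ℕ), (∑ i, c i = L.card) →
      ∃ P : Fin n → Finset V, (∀ i, P i ⊆ L) ∧ (∀ i, (P i).card = c i) ∧
        (∀ i j, i ≠ j → Disjoint (P i) (P j)) ∧ (∀ x ∈ L, ∃ i, x ∈ P i))
    (n : ℕ) (hn : 0 < n) :
    ∀ (N : ℕ) (A : Finset V), A.card ≤ N →
    ∃ S : Fin n → Finset V, (∀ i, S i ⊆ A) ∧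
      (∀ i j, i ≠ j → Disjoint (S i) (S j)) ∧
      (∀ i, ∀ x ∈ S i, ∀ y ∈ S i, ¬ G.Adj x y) ∧
      (∀ v ∈ A, (∀ i, v ∉ S i) → ∀ i, ∃ x ∈ S i, G.Adj v x) ∧
      (∀ i j, (S i).card ≤ (S j).card + 1) := by
  classical
  intro N
  induction N with
  | zero =>
    intro A hA
    have : A = ∅ := card_eq_zero.mp (Nat.le_zero.mp hA)
    subst this
    exact ⟨fun _ => ∅, by simp, by simp, by simp, by simp, by simp⟩
  | succ N ih =>
    intro A hcard
    rcases eq_or_ne A ∅ with rfl | hAne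
    · exact ⟨fun _ => ∅, by simp, by simp, by simp, by simp, by simp⟩
    by_cases hiso : ∃ x ∈ A, ∀ y ∈ A, ¬ G.Adj x y
    -- isolated vertex case
    · obtain ⟨x, hxA, hxiso⟩ := hiso
      obtain ⟨S, hsub, hdisj, hind, hdom, hbal⟩ := ih (A.erase x)
        (by rw [card_erase_of_mem hxA]; omega)
      obtain ⟨i0, -, hi0⟩ := Finset.exists_min_image univ (fun i => (S i).card)
        ⟨⟨0, hn⟩, mem_univ _⟩
      have hi0' : ∀ j, (S i0).card ≤ (S j).card := fun j => hi0 j (mem_univ j)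
      have hxS : ∀ i, x ∉ S i := fun i hc => (mem_erase.mp (hsub i hc)).1 rfl
      have hSA : ∀ i, ∀ z ∈ S i, z ∈ A := fun i z hz => (erase_subset _ _) (hsub i hz)
      refine ⟨fun i => if i = i0 then insert x (S i0) else S i, ?_, ?_, ?_, ?_, ?_⟩
      · intro i
        dsimp only
        split_ifs with hi
        · exact insert_subset hxA ((hsub i0).trans (erase_subset _ _))
        · exact (hsub i).trans (erase_subset _ _)
      · intro i j hij
        dsimp only
        split_ifs with hi hj hj
        · exact absurd (hi.trans hj.symm) hij
        · rw [disjoint_insert_left]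
          exact ⟨hxS j, hdisj i0 j (hi ▸ hij)⟩
        · rw [disjoint_insert_right]
          exact ⟨hxS i, hdisj i i0 (hj ▸ hij)⟩
        · exact hdisj i j hij
      · intro i y hy z hz
        dsimp only at hy hz
        split_ifs at hy hz with hi
        · rcases mem_insert.mp hy with rfl | hy' <;> rcases mem_insert.mp hz with rfl | hz'
          · exact fun hc => G.irrefl hc
          · exact hxiso z (hSA i0 z hz')
          · exact fun hc => hxiso y (hSA i0 y hy') hc.symm
          · exact hind i0 y hy' z hz'
        · exact hind i y hy z hz
      · intro v hvA hvn i
        dsimp only at hvn ⊢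
        have hvx : v ≠ x := by
          intro hvx
          exact hvn i0 (by rw [if_pos rfl, hvx]; exact mem_insert_self _ _)
        have hvn' : ∀ i', v ∉ S i' := by
          intro i' hc
          apply hvn i'
          split_ifs with hi'
          · exact mem_insert_of_mem (hi' ▸ hc)
          · exact hc
        obtain ⟨z, hz, hadj⟩ := hdom v (mem_erase.mpr ⟨hvx, hvA⟩) hvn' i
        refine ⟨z, ?_, hadj⟩
        split_ifs with hi
        · exact mem_insert_of_mem (hi ▸ hz)
        · exact hz
      · intro i j
        dsimp only
        have hins : (insert x (S i0)).card = (S i0).card + 1 :=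
          card_insert_of_notMem (hxS i0)
        split_ifs with hi hj hj
        · omega
        · rw [hins]; exact Nat.add_le_add_right (hi0' j) 1
        · rw [hins]
          have := hbal i i0
          omega
        · exact hbal i j
    -- no isolated vertex
    · push_neg at hiso
      have hAne' : A.Nonempty := nonempty_iff_ne_empty.mpr hAne
      obtain ⟨u, huA, Wf, hWA, hW1, hWadj, ⟨x0, hx0A, hx0adj, hx0W⟩, hleaf⟩ :=
        penult A hAne' hiso
      set L := A.filter (fun x => G.Adj u x ∧ x ∉ Wf) with hLdef
      have hmemL : ∀ x, x ∈ L ↔ x ∈ A ∧ G.Adj u x ∧ x ∉ Wf := by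
        intro x; simp [hLdef]
      have hx0L : x0 ∈ L := (hmemL x0).mpr ⟨hx0A, hx0adj, hx0W⟩
      have huL : u ∉ L := fun hc => G.irrefl ((hmemL u).mp hc).2.1
      have hLA : L ⊆ A := filter_subset _ _
      have hd1 : 1 ≤ L.card := card_pos.mpr ⟨x0, hx0L⟩
      set A' := A \ insert u L with hA'def
      have hA'sub : A' ⊆ A := sdiff_subset
      have hmemA' : ∀ z, z ∈ A' ↔ z ∈ A ∧ z ≠ u ∧ z ∉ L := by
        intro z; rw [hA'def, mem_sdiff, mem_insert]; tauto
      have hA'card : A'.card ≤ N := by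
        have h1 : A' ⊆ A.erase u := by
          intro z hz
          rw [mem_erase]
          rw [hmemA' z] at hz
          exact ⟨hz.2.1, hz.1⟩
        have := card_le_card h1
        rw [card_erase_of_mem huA] at this
        omega
      obtain ⟨S', hsub, hdisj, hind, hdom, hbal⟩ := ih A' hA'card
      have hleafL : ∀ x ∈ L, ∀ y ∈ A, G.Adj x y → y = u := by
        intro x hx y hy hxy
        obtain ⟨hxA, hux, hxW⟩ := (hmemL x).mp hx
        exact hleaf x hxA hux hxW y hy hxy
      have hadjL : ∀ x ∈ L, G.Adj u x := fun x hx => ((hmemL x).mp hx).2.1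
      have hS'A : ∀ i, ∀ z ∈ S' i, z ∈ A := fun i z hz => hA'sub (hsub i hz)
      have huS' : ∀ i, u ∉ S' i := fun i hc => ((hmemA' u).mp (hsub i hc)).2.1 rfl
      have hLS' : ∀ i, ∀ x ∈ L, x ∉ S' i := fun i x hx hc =>
        ((hmemA' x).mp (hsub i hc)).2.2 hx
      have hdisjS'P : ∀ i j (P : Fin n → Finset V), (∀ k, P k ⊆ L) →
          Disjoint (S' i) (P j) := by
        intro i j P hPL
        rw [Finset.disjoint_left]
        intro z hz hzP
        exact hLS' i z (hPL j hzP) hz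
      by_cases hdn : n ≤ L.card
      -- Strategy B : u uncovered, leaves fill every class
      · obtain ⟨c, hc1, hcsum, hcbal⟩ := lemB n hn (fun i => (S' i).card) hbal L.card hdn
        obtain ⟨P, hPL, hPcard, hPdisj, hPcover⟩ := expart n L c hcsum
        refine ⟨fun i => S' i ∪ P i, ?_, ?_, ?_, ?_, ?_⟩
        · intro i
          dsimp only
          exact union_subset ((hsub i).trans hA'sub) ((hPL i).trans hLA)
        · intro i j hij
          dsimp only
          rw [disjoint_union_left, disjoint_union_right, disjoint_union_right]
          exact ⟨⟨hdisj i j hij, hdisjS'P i j P hPL⟩,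
            ⟨(hdisjS'P j i P hPL).symm, hPdisj i j hij⟩⟩
        · intro i y hy z hz hyz
          dsimp only at hy hz
          rcases mem_union.mp hy with hy' | hy' <;> rcases mem_union.mp hz with hz' | hz'
          · exact hind i y hy' z hz' hyz
          · have := hleafL z (hPL i hz') y (hS'A i y hy') hyz.symm
            exact huS' i (this ▸ hy')
          · have := hleafL y (hPL i hy') z (hS'A i z hz') hyz
            exact huS' i (this ▸ hz')
          · have := hleafL y (hPL i hy') z (hLA (hPL i hz')) hyz
            exact huL (hPL i (this ▸ hz'))
        · intro v hvA hvn i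
          dsimp only at hvn ⊢
          by_cases hvL : v ∈ L
          · obtain ⟨iv, hiv⟩ := hPcover v hvL
            exact absurd (mem_union_right _ hiv) (hvn iv)
          by_cases hvu : v = u
          · subst hvu
            have : 0 < (P i).card := by rw [hPcard]; exact hc1 i
            obtain ⟨z, hz⟩ := card_pos.mp this
            exact ⟨z, mem_union_right _ hz, hadjL z (hPL i hz)⟩
          · obtain ⟨z, hz, hadj⟩ := hdom v ((hmemA' v).mpr ⟨hvA, hvu, hvL⟩)
              (fun i' hc => hvn i' (mem_union_left _ hc)) i
            exact ⟨z, mem_union_left _ hz, hadj⟩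
        · intro i j
          dsimp only
          rw [card_union_of_disjoint (hdisjS'P i i P hPL),
            card_union_of_disjoint (hdisjS'P j j P hPL), hPcard, hPcard]
          exact hcbal i j
      -- Strategy A : u covered
      · push_neg at hdn
        have hFcard : (univ.filter (fun i => ∃ x ∈ Wf, x ∈ S' i)).card ≤ 1 := by
          rw [card_le_one]
          intro i hi j hj
          rw [mem_filter] at hi hj
          obtain ⟨-, x, hxW, hxi⟩ := hi
          obtain ⟨-, y, hyW, hyj⟩ := hj
          have hxy : x = y := card_le_one.mp hW1 x hxW y hyW
          subst hxy
          by_contra hij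
          exact (disjoint_left.mp (hdisj i j hij) hxi) hyj
        obtain ⟨i0, D, hi0D, hi0F, hDcard, hDbal⟩ := lemA n (fun i => (S' i).card) hbal
          (univ.filter (fun i => ∃ x ∈ Wf, x ∈ S' i)) hFcard L.card hd1 (by omega)
        have hWS'i0 : ∀ x ∈ Wf, x ∉ S' i0 := by
          intro x hxW hxi0
          exact hi0F (mem_filter.mpr ⟨mem_univ _, x, hxW, hxi0⟩)
        set c : Fin n → ℕ := fun i => if i ∈ D.erase i0 then 1 else 0 with hcdef
        have hcsum : ∑ i, c i = L.card := by
          rw [hcdef]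
          rw [Finset.sum_ite_mem, univ_inter, Finset.sum_const, smul_eq_mul, mul_one,
            card_erase_of_mem hi0D, hDcard]
          omega
        obtain ⟨P, hPL, hPcard, hPdisj, hPcover⟩ := expart n L c hcsum
        have hPi0 : P i0 = ∅ := by
          rw [← Finset.card_eq_zero, hPcard, hcdef]
          simp
        refine ⟨fun i => if i = i0 then insert u (S' i0) else S' i ∪ P i, ?_, ?_, ?_, ?_, ?_⟩
        · intro i
          dsimp only
          split_ifs with hi
          · exact insert_subset huA ((hsub i0).trans hA'sub)
          · exact union_subset ((hsub i).trans hA'sub) ((hPL i).trans hLA)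
        · intro i j hij
          dsimp only
          have hkey : ∀ k, k ≠ i0 → Disjoint (insert u (S' i0)) (S' k ∪ P k) := by
            intro k hk
            rw [disjoint_insert_left, disjoint_union_right]
            refine ⟨?_, hdisj i0 k (fun hc => hk hc.symm), hdisjS'P i0 k P hPL⟩
            rw [mem_union]
            rintro (hc | hc)
            · exact huS' k hc
            · exact huL (hPL k hc)
          split_ifs with hi hj hj
          · exact absurd (hi.trans hj.symm) hij
          · exact hkey j hj
          · exact (hkey i hi).symm
          · rw [disjoint_union_left, disjoint_union_right, disjoint_union_right]
            exact ⟨⟨hdisj i j hij, hdisjS'P i j P hPL⟩,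
              ⟨(hdisjS'P j i P hPL).symm, hPdisj i j hij⟩⟩
        · intro i y hy z hz hyz
          dsimp only at hy hz
          split_ifs at hy hz with hi
          · rcases mem_insert.mp hy with rfl | hy' <;> rcases mem_insert.mp hz with rfl | hz'
            · exact G.irrefl hyz
            · -- y = u, z ∈ S' i0
              have hzA : z ∈ A := hS'A i0 z hz'
              by_cases hzW : z ∈ Wf
              · exact hWS'i0 z hzW hz'
              · exact hLS' i0 z ((hmemL z).mpr ⟨hzA, hyz, hzW⟩) hz'
            · have hyA : y ∈ A := hS'A i0 y hy'
              by_cases hyW : y ∈ Wf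
              · exact hWS'i0 y hyW hy'
              · exact hLS' i0 y ((hmemL y).mpr ⟨hyA, hyz.symm, hyW⟩) hy'
            · exact hind i0 y hy' z hz' hyz
          · rcases mem_union.mp hy with hy' | hy' <;> rcases mem_union.mp hz with hz' | hz'
            · exact hind i y hy' z hz' hyz
            · have := hleafL z (hPL i hz') y (hS'A i y hy') hyz.symm
              exact huS' i (this ▸ hy')
            · have := hleafL y (hPL i hy') z (hS'A i z hz') hyz
              exact huS' i (this ▸ hz')
            · have := hleafL y (hPL i hy') z (hLA (hPL i hz')) hyz
              exact huL (hPL i (this ▸ hz'))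
        · intro v hvA hvn i
          dsimp only at hvn ⊢
          have hvu : v ≠ u := by
            intro hvu
            exact hvn i0 (by rw [if_pos rfl, hvu]; exact mem_insert_self _ _)
          by_cases hvL : v ∈ L
          · obtain ⟨iv, hiv⟩ := hPcover v hvL
            have hivne : iv ≠ i0 := by
              intro hivv
              rw [hivv, hPi0] at hiv
              exact notMem_empty v hiv
            exact absurd (by rw [if_neg hivne]; exact mem_union_right _ hiv) (hvn iv)
          · obtain ⟨z, hz, hadj⟩ := hdom v ((hmemA' v).mpr ⟨hvA, hvu, hvL⟩)
              (fun i' hc => hvn i' (by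
                split_ifs with hi'
                · exact mem_insert_of_mem (hi' ▸ hc)
                · exact mem_union_left _ hc)) i
            refine ⟨z, ?_, hadj⟩
            split_ifs with hi
            · exact mem_insert_of_mem (hi ▸ hz)
            · exact mem_union_left _ hz
        · dsimp only
          have hcards : ∀ i, (if i = i0 then insert u (S' i0) else S' i ∪ P i).card
              = (S' i).card + (if i ∈ D then 1 else 0) := by
            intro i
            by_cases hi : i = i0
            · rw [if_pos hi, hi, card_insert_of_notMem (huS' i0), if_pos hi0D]
            · have hic : c i = if i ∈ D then 1 else 0 := by
                rw [hcdef]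
                dsimp only
                have hiff : i ∈ D.erase i0 ↔ i ∈ D := by
                  rw [mem_erase]
                  exact ⟨fun h => h.2, fun h => ⟨hi, h⟩⟩
                by_cases hiD : i ∈ D
                · rw [if_pos (hiff.mpr hiD), if_pos hiD]
                · rw [if_neg (fun hc => hiD (hiff.mp hc)), if_neg hiD]
              rw [if_neg hi, card_union_of_disjoint (hdisjS'P i i P hPL), hPcard, hic]
          intro i j
          rw [hcards i, hcards j]
          exact hDbal i j


end Stmt18Aux

/-- every finite tree admits a maximal equitable n-coloring for every n ≥ 1. -/
theorem stmt_18 {V : Type*} [Fintype V] [DecidableEq V] (G : SimpleGraph V)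
    (hT : G.IsTree) (n : ℕ) (hn : 0 < n) :
    ∃ S : Fin n → Finset V,
      (∀ i j : Fin n, i ≠ j → Disjoint (S i) (S j)) ∧
      (∀ i : Fin n, ∀ x ∈ S i, ∀ y ∈ S i, ¬ G.Adj x y) ∧
      (∀ v : V, (∀ i : Fin n, v ∉ S i) → ∀ i : Fin n, ∃ x ∈ S i, G.Adj v x) ∧
      (∀ i j : Fin n, (S i).card ≤ (S j).card + 1) := by
  classical
  obtain ⟨S, hsub, hdisj, hind, hdom, hbal⟩ :=
    Stmt18Aux.aux G hT.IsAcyclic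
      (fun A hne hdeg => Stmt18Aux.penult G hT.IsAcyclic A hne hdeg)
      (fun n hn s hs d hd => Stmt18Aux.lemB hn s hs d hd)
      (fun n s hs F hF d h1 h2 => Stmt18Aux.lemA s hs F hF d h1 h2)
      (fun n L c h => Stmt18Aux.exists_partition L c h)
      n hn Finset.univ.card Finset.univ le_rfl
  exact ⟨S, hdisj, hind, fun v hv i => hdom v (Finset.mem_univ v) hv i, hbal⟩
end

section
/- For every finite tree T = (V, E), every vertex r ∈ V, and every positive integer n, there exists a maximal equitable n-coloring (S_1,...,S_n) of T such that either r ∈ V \ (S_1 ∪ ... ∪ S_n), or r belongs to some S_i with |S_i| = max_{j∈{1,...,n}} |S_j| (i.e., r receives a color of maximum class size or is uncolored). -/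
namespace Stmt19


/-- Split a finset into parts of prescribed sizes. -/
lemma split_finset {X : Type*} [DecidableEq X] :
    ∀ (n : ℕ) (d : Fin n → ℕ) (C : Finset X), (∑ i, d i) = C.card →
    ∃ f : Fin n → Finset X, (∀ i, f i ⊆ C) ∧ (∀ i j, i ≠ j → Disjoint (f i) (f j)) ∧
      (∀ i, (f i).card = d i) ∧ (∀ x ∈ C, ∃ i, x ∈ f i) := by
  intro n
  induction n with
  | zero =>
    intro d C h
    refine ⟨fun _ => ∅, by simp, by simp, fun i => i.elim0, fun x hx => ?_⟩
    have : C = ∅ := Finset.card_eq_zero.mp h.symm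
    subst this
    simp at hx
  | succ n ih =>
    intro d C h
    rw [Fin.sum_univ_succ] at h
    have h0 : d 0 ≤ C.card := by omega
    obtain ⟨C0, hC0sub, hC0card⟩ := Finset.exists_subset_card_eq h0
    have hrest : (∑ i : Fin n, d i.succ) = (C \ C0).card := by
      rw [Finset.card_sdiff_of_subset hC0sub]
      omega
    obtain ⟨f', hf'sub, hf'disj, hf'card, hf'cov⟩ := ih (fun i => d i.succ) (C \ C0) hrest
    refine ⟨fun i => Fin.cases C0 f' i, ?_, ?_, ?_, ?_⟩
    · intro i
      induction i using Fin.cases with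
      | zero => simpa using hC0sub
      | succ i => simpa using (hf'sub i).trans (Finset.sdiff_subset)
    · intro i j hij
      induction i using Fin.cases with
      | zero =>
        induction j using Fin.cases with
        | zero => exact absurd rfl hij
        | succ j =>
          simp only [Fin.cases_zero, Fin.cases_succ]
          exact (Finset.disjoint_sdiff.mono_right (hf'sub j) : Disjoint C0 (f' j))
      | succ i =>
        induction j using Fin.cases with
        | zero =>
          simp only [Fin.cases_zero, Fin.cases_succ]
          exact (Finset.disjoint_sdiff.mono_right (hf'sub i) : Disjoint C0 (f' i)).symm
        | succ j =>
          simp only [Fin.cases_succ]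
          exact hf'disj i j (fun hh => hij (by rw [hh]))
    · intro i
      induction i using Fin.cases with
      | zero => simpa using hC0card
      | succ i => simpa using hf'card i
    · intro x hx
      by_cases hx0 : x ∈ C0
      · exact ⟨0, by simpa using hx0⟩
      · obtain ⟨i, hi⟩ := hf'cov x (Finset.mem_sdiff.mpr ⟨hx, hx0⟩)
        exact ⟨i.succ, by simpa using hi⟩



lemma exists_incr {n : ℕ} (s : Fin n → ℕ) (hs : ∀ i j, s i ≤ s j + 1)
    (k : ℕ) (hk : k ≤ n) (j : Fin n) (hj : ∀ i, s i ≤ s j) :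
    ∃ I : Finset (Fin n), I.card = k ∧
      (∀ i i', s i + (if i ∈ I then 1 else 0) ≤ s i' + (if i' ∈ I then 1 else 0) + 1) ∧
      (∀ i, s i + (if i ∈ I then 1 else 0) ≤ s j + (if j ∈ I then 1 else 0)) := by
  classical
  set m := s j - 1 with hm
  -- every value is s j - 1 or s j?  Not quite: use min value instead.
  clear_value m
  clear hm
  -- use the minimum
  obtain ⟨i0, -, hmin⟩ := Finset.exists_min_image Finset.univ s ⟨j, Finset.mem_univ j⟩
  have hlow : ∀ i, s i0 ≤ s i := fun i => hmin i (Finset.mem_univ i)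
  have hhigh : ∀ i, s i ≤ s i0 + 1 := fun i => hs i i0
  set Big : Finset (Fin n) := Finset.univ.filter (fun i => s i = s i0 + 1) with hBig
  have hBigmem : ∀ i, i ∈ Big ↔ s i = s i0 + 1 := by
    intro i; simp [hBig]
  have hcompl : ∀ i, i ∈ Bigᶜ ↔ s i = s i0 := by
    intro i
    simp only [Finset.mem_compl, hBigmem]
    have := hlow i; have := hhigh i
    omega
  have hcardsum : Bigᶜ.card + Big.card = n := by
    rw [Finset.card_compl]
    have := Finset.card_le_univ Big
    simp only [Finset.card_univ, Fintype.card_fin] at *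
    omega
  by_cases hcase : k ≤ Bigᶜ.card
  · by_cases hjBig : s j = s i0 + 1
    · obtain ⟨I, hIsub, hIcard⟩ := Finset.exists_subset_card_eq hcase
      have hImem : ∀ i ∈ I, s i = s i0 := fun i hi => (hcompl i).mp (hIsub hi)
      have hjI : j ∉ I := fun h => by have := hImem j h; omega
      refine ⟨I, hIcard, ?_, ?_⟩
      · intro i i'
        by_cases h1 : i ∈ I <;> by_cases h2 : i' ∈ I <;>
          simp only [h1, h2, if_true, if_false] <;>
          [skip; skip; skip; skip] <;>
          first
            | (have := hImem i h1; have := hlow i'; have := hhigh i'; omega)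
            | (have := hlow i; have := hhigh i; have := hlow i'; have := hhigh i'; omega)
      · intro i
        simp only [hjI, if_false]
        by_cases h1 : i ∈ I <;> simp only [h1, if_true, if_false]
        · have := hImem i h1; omega
        · have := hhigh i; omega
    · -- s j = s i0, hence all values equal s i0
      have hall : ∀ i, s i = s i0 := by
        intro i
        have := hj i; have := hlow i; have := hlow j; have := hhigh j
        omega
      rcases Nat.eq_zero_or_pos k with hk0 | hk0
      · refine ⟨∅, by simp [hk0], ?_, ?_⟩
        · intro i i'; simp; have := hall i; have := hall i'; omega
        · intro i; simp; have := hall i; have := hall j; omega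
      · have hcard' : k - 1 ≤ (Finset.univ.erase j).card := by
          rw [Finset.card_erase_of_mem (Finset.mem_univ j)]
          simp only [Finset.card_univ, Fintype.card_fin]
          omega
        obtain ⟨I', hI'sub, hI'card⟩ := Finset.exists_subset_card_eq hcard'
        have hjI' : j ∉ I' := fun h => (Finset.mem_erase.mp (hI'sub h)).1 rfl
        refine ⟨insert j I', ?_, ?_, ?_⟩
        · rw [Finset.card_insert_of_notMem hjI', hI'card]; omega
        · intro i i'
          by_cases h1 : i ∈ insert j I' <;> by_cases h2 : i' ∈ insert j I' <;>
            simp only [h1, h2, if_true, if_false] <;>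
            (have := hall i; have := hall i'; omega)
        · intro i
          simp only [Finset.mem_insert_self, if_true]
          by_cases h1 : i ∈ insert j I' <;> simp only [h1, if_true, if_false] <;>
            (have := hall i; have := hall j; omega)
  · -- k > Bigᶜ.card : take all of Bigᶜ plus part of Big including j
    push_neg at hcase
    have hjBig : s j = s i0 + 1 := by
      by_contra hne
      have hBigempty : Big = ∅ := by
        rw [Finset.eq_empty_iff_forall_notMem]
        intro b hb
        have hb' := (hBigmem b).mp hb
        have := hj b; have := hlow j; have := hhigh j
        omega
      have h0 : Big.card = 0 := by rw [hBigempty]; simp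
      omega
    have hjinBig : j ∈ Big := (hBigmem j).mpr hjBig
    have hcard' : k - Bigᶜ.card - 1 ≤ (Big.erase j).card := by
      rw [Finset.card_erase_of_mem hjinBig]
      omega
    obtain ⟨J', hJ'sub, hJ'card⟩ := Finset.exists_subset_card_eq hcard'
    have hjJ' : j ∉ J' := fun h => (Finset.mem_erase.mp (hJ'sub h)).1 rfl
    set I : Finset (Fin n) := Bigᶜ ∪ insert j J' with hI
    have hIBig : insert j J' ⊆ Big := by
      intro x hx
      rcases Finset.mem_insert.mp hx with h | h
      · exact h ▸ hjinBig
      · exact (Finset.erase_subset _ _) (hJ'sub h)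
    have hIdisj : Disjoint Bigᶜ (insert j J') :=
      Finset.disjoint_left.mpr fun x hx hx2 => (Finset.mem_compl.mp hx) (hIBig hx2)
    have hIcard : I.card = k := by
      rw [hI, Finset.card_union_of_disjoint hIdisj,
        Finset.card_insert_of_notMem hjJ', hJ'card]
      omega
    have hjI : j ∈ I := Finset.mem_union_right _ (Finset.mem_insert_self _ _)
    have hsmallI : ∀ i, s i = s i0 → i ∈ I := by
      intro i hi
      exact Finset.mem_union_left _ ((hcompl i).mpr hi)
    have hnotI : ∀ i, i ∉ I → s i = s i0 + 1 := by
      intro i hi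
      by_contra hne
      have : s i = s i0 := by have := hlow i; have := hhigh i; omega
      exact hi (hsmallI i this)
    refine ⟨I, hIcard, ?_, ?_⟩
    · intro i i'
      by_cases h1 : i ∈ I <;> by_cases h2 : i' ∈ I <;>
        simp only [h1, h2, if_true, if_false] <;>
        first
          | (have := hnotI i' h2; have := hlow i; have := hhigh i; omega)
          | (have := hnotI i h1; have := hnotI i' h2; omega)
          | (have := hlow i; have := hhigh i; have := hlow i'; have := hhigh i'; omega)
    · intro i
      simp only [hjI, if_true, hjBig]
      by_cases h1 : i ∈ I <;> simp only [h1, if_true, if_false] <;>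
        (have := hlow i; have := hhigh i; omega)


def padj {V : Type*} (par : V → V) (r x y : V) : Prop :=
  (x ≠ r ∧ par x = y) ∨ (y ≠ r ∧ par y = x)

lemma padj_symm {V : Type*} {par : V → V} {r x y : V} (h : padj par r x y) :
    padj par r y x := h.symm

lemma core {V : Type*} [Fintype V] [DecidableEq V] (par : V → V) (dep : V → ℕ) (r : V)
    (hpr : par r = r) (hr0 : dep r = 0)
    (hdep : ∀ v, v ≠ r → dep (par v) + 1 = dep v)
    (hzero : ∀ v, dep v = 0 → v = r)
    (n : ℕ) (hn : 0 < n) :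
    ∀ (N : ℕ) (W : Finset V), W.card ≤ N → r ∈ W → (∀ v ∈ W, v ≠ r → par v ∈ W) →
    ∃ S : Fin n → Finset V,
      (∀ i, S i ⊆ W) ∧
      (∀ i j, i ≠ j → Disjoint (S i) (S j)) ∧
      (∀ i, ∀ x ∈ S i, ∀ y ∈ S i, ¬ padj par r x y) ∧
      (∀ v ∈ W, (∀ i, v ∉ S i) → ∀ i, ∃ x ∈ S i, padj par r v x) ∧
      (∀ i j, (S i).card ≤ (S j).card + 1) ∧
      ((∀ i, r ∉ S i) ∨ ∃ i, r ∈ S i ∧ ∀ j, (S j).card ≤ (S i).card) := by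
  classical
  have hparne : ∀ v, v ≠ r → par v ≠ v := by
    intro v hv heq
    have := hdep v hv
    rw [heq] at this
    omega
  have hpadj_irrefl : ∀ x, ¬ padj par r x x := by
    rintro x (⟨hxr, hpar⟩ | ⟨hxr, hpar⟩) <;> exact hparne x hxr hpar
  intro N
  induction N with
  | zero =>
    intro W hWcard hrW _
    exact absurd (Finset.card_pos.mpr ⟨r, hrW⟩) (by omega)
  | succ N ih =>
    intro W hWcard hrW hclosed
    by_cases hWn : W.card ≤ n
    · -- BASE CASE : one singleton class per vertex
      set e := W.equivFin with he
      refine ⟨fun i => if h : (i : ℕ) < W.card then {(e.symm ⟨(i : ℕ), h⟩ : V)} else ∅,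
        ?_, ?_, ?_, ?_, ?_, ?_⟩
      · intro i
        by_cases h : (i : ℕ) < W.card <;> simp only [h, dif_pos, dif_neg, not_false_iff]
        · intro x hx
          simp only [Finset.mem_singleton] at hx
          subst hx
          exact (e.symm ⟨(i : ℕ), h⟩).2
        · simp
      · intro i j hij
        by_cases h1 : (i : ℕ) < W.card <;> by_cases h2 : (j : ℕ) < W.card <;>
          simp only [h1, h2, dif_pos, dif_neg, not_false_iff, Finset.disjoint_empty_left,
            Finset.disjoint_empty_right]
        rw [Finset.disjoint_singleton]
        intro heq
        have : (⟨(i : ℕ), h1⟩ : Fin W.card) = ⟨(j : ℕ), h2⟩ := by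
          apply e.symm.injective
          exact Subtype.ext heq
        exact hij (Fin.ext (by simpa using congrArg Fin.val this))
      · intro i x hx y hy
        by_cases h : (i : ℕ) < W.card <;> simp only [h, dif_pos, dif_neg, not_false_iff] at hx hy
        · simp only [Finset.mem_singleton] at hx hy
          subst hx; subst hy
          exact hpadj_irrefl _
        · simp at hx
      · intro v hv hunc
        exfalso
        have hlt : ((e ⟨v, hv⟩ : Fin W.card) : ℕ) < W.card := (e ⟨v, hv⟩).isLt
        have hlt' : ((e ⟨v, hv⟩ : Fin W.card) : ℕ) < n := lt_of_lt_of_le hlt hWn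
        apply hunc ⟨_, hlt'⟩
        simp only [hlt, dif_pos]
        have : (⟨((e ⟨v, hv⟩ : Fin W.card) : ℕ), hlt⟩ : Fin W.card) = e ⟨v, hv⟩ := rfl
        rw [this]
        simp
      · intro i j
        by_cases h1 : (i : ℕ) < W.card <;> by_cases h2 : (j : ℕ) < W.card <;>
          simp [h1, h2]
      · right
        have hlt : ((e ⟨r, hrW⟩ : Fin W.card) : ℕ) < W.card := (e ⟨r, hrW⟩).isLt
        have hlt' : ((e ⟨r, hrW⟩ : Fin W.card) : ℕ) < n := lt_of_lt_of_le hlt hWn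
        refine ⟨⟨_, hlt'⟩, ?_, ?_⟩
        · simp only [hlt, dif_pos]
          have : (⟨((e ⟨r, hrW⟩ : Fin W.card) : ℕ), hlt⟩ : Fin W.card) = e ⟨r, hrW⟩ := rfl
          rw [this]
          simp
        · intro j
          simp only [hlt, dif_pos]
          have : (⟨((e ⟨r, hrW⟩ : Fin W.card) : ℕ), hlt⟩ : Fin W.card) = e ⟨r, hrW⟩ := rfl
          rw [this]
          by_cases h : (j : ℕ) < W.card <;> simp [h]
    · push_neg at hWn
      obtain ⟨u, huW, humax⟩ := Finset.exists_max_image W dep ⟨r, hrW⟩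
      by_cases hDs : dep u ≤ 1
      · -- STAR CASE : every non-root vertex is a child of r
        have hstar : ∀ v ∈ W, v ≠ r → par v = r := by
          intro v hv hvr
          have h1 := hdep v hvr
          have h2 := humax v hv
          have h3 := humax r hrW
          have : dep (par v) = 0 := by omega
          exact hzero _ this
        set L := W.erase r with hL
        have hLcard : L.card + 1 = W.card := Finset.card_erase_add_one hrW
        have hLn : n ≤ L.card := by omega
        have hq0pos : 1 ≤ L.card / n := (Nat.one_le_div_iff hn).mpr hLn
        obtain ⟨I, hIcard, hIwithin, -⟩ := exists_incr (fun _ : Fin n => 0)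
          (by intro i j; norm_num) (L.card % n) (le_of_lt (Nat.mod_lt _ hn)) ⟨0, hn⟩
          (by intro i; norm_num)
        have hsum : (∑ i : Fin n, (L.card / n + if i ∈ I then 1 else 0)) = L.card := by
          rw [Finset.sum_add_distrib, Finset.sum_const, Finset.sum_ite_mem,
            Finset.univ_inter, Finset.sum_const]
          simp only [Finset.card_univ, Fintype.card_fin, smul_eq_mul, mul_one]
          rw [hIcard]
          have := Nat.div_add_mod L.card n
          omega
        obtain ⟨f, hfsub, hfdisj, hfcard, hfcov⟩ :=
          split_finset n (fun i => L.card / n + if i ∈ I then 1 else 0) L hsum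
        have hLmem : ∀ x ∈ L, x ∈ W ∧ x ≠ r := by
          intro x hx
          exact ⟨Finset.mem_of_mem_erase hx, Finset.ne_of_mem_erase hx⟩
        refine ⟨f, ?_, hfdisj, ?_, ?_, ?_, ?_⟩
        · intro i
          exact (hfsub i).trans (Finset.erase_subset _ _)
        · intro i x hx y hy
          obtain ⟨hxW, hxr⟩ := hLmem x (hfsub i hx)
          obtain ⟨hyW, hyr⟩ := hLmem y (hfsub i hy)
          rintro (⟨-, hpar⟩ | ⟨-, hpar⟩)
          · exact hyr (hpar.symm.trans (hstar x hxW hxr))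
          · exact hxr (hpar.symm.trans (hstar y hyW hyr))
        · intro v hv hunc i
          by_cases hvr : v = r
          · have : (f i).Nonempty := by
              rw [← Finset.card_pos, hfcard i]
              omega
            obtain ⟨x, hx⟩ := this
            obtain ⟨hxW, hxr⟩ := hLmem x (hfsub i hx)
            exact ⟨x, hx, Or.inr ⟨hxr, hvr ▸ hstar x hxW hxr⟩⟩
          · exfalso
            obtain ⟨i', hi'⟩ := hfcov v (Finset.mem_erase.mpr ⟨hvr, hv⟩)
            exact hunc i' hi'
        · intro i j
          rw [hfcard i, hfcard j]
          have := hIwithin i j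
          omega
        · left
          intro i hri
          exact (hLmem r (hfsub i hri)).2 rfl
      · -- GLUE CASE
        push_neg at hDs
        have hur : u ≠ r := by
          intro h
          rw [h, hr0] at hDs
          omega
        set p := par u with hp
        have hpW : p ∈ W := hclosed u huW hur
        have hdepp : dep p + 1 = dep u := hdep u hur
        have hpr' : p ≠ r := by
          intro h
          rw [h, hr0] at hdepp
          omega
        set C := W.filter (fun w => par w = p) with hC
        have hCmem : ∀ w, w ∈ C ↔ w ∈ W ∧ par w = p := by intro w; simp [hC]
        have hCu : u ∈ C := (hCmem u).mpr ⟨huW, rfl⟩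
        have hCr : r ∉ C := by
          intro h
          exact hpr' (hpr.symm.trans ((hCmem r).mp h).2).symm
        have hCdep : ∀ w ∈ C, dep w = dep u := by
          intro w hw
          obtain ⟨hwW, hwp⟩ := (hCmem w).mp hw
          have hwr : w ≠ r := fun h => hCr (h ▸ hw)
          have h2 := hdep w hwr
          rw [hwp] at h2
          omega
        have hCp : p ∉ C := fun h => hparne p hpr' ((hCmem p).mp h).2
        set W' := W \ insert p C with hW'
        have hW'sub : W' ⊆ W := Finset.sdiff_subset
        have hW'mem : ∀ v, v ∈ W' ↔ v ∈ W ∧ v ≠ p ∧ v ∉ C := by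
          intro v
          simp only [hW', Finset.mem_sdiff, Finset.mem_insert]
          tauto
        have hrW' : r ∈ W' := (hW'mem r).mpr ⟨hrW, fun h => hpr' h.symm, hCr⟩
        have hW'closed : ∀ v ∈ W', v ≠ r → par v ∈ W' := by
          intro v hv hvr
          obtain ⟨hvW, hvp, hvC⟩ := (hW'mem v).mp hv
          refine (hW'mem _).mpr ⟨hclosed v hvW hvr, ?_, ?_⟩
          · intro h
            exact hvC ((hCmem v).mpr ⟨hvW, h⟩)
          · intro h
            have h1 := hCdep _ h
            have h2 := hdep v hvr
            have h3 := humax v hvW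
            omega
        have hinsub : insert p C ⊆ W := by
          intro x hx
          rcases Finset.mem_insert.mp hx with h | h
          · exact h ▸ hpW
          · exact ((hCmem x).mp h).1
        have hW'card : W'.card + (C.card + 1) = W.card := by
          rw [hW', Finset.card_sdiff_of_subset hinsub, Finset.card_insert_of_notMem hCp]
          have h1 := Finset.card_le_card hinsub
          rw [Finset.card_insert_of_notMem hCp] at h1
          omega
        have hCpos : 1 ≤ C.card := Finset.card_pos.mpr ⟨u, hCu⟩
        obtain ⟨S', hsub', hdisj', hind', hmax', heq', hrcond'⟩ :=
          ih W' (by omega) hrW' hW'closed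
        set q := par p with hqdef
        have hqW' : q ∈ W' := by
          refine (hW'mem q).mpr ⟨hclosed p hpW hpr', fun h => hparne p hpr' h, ?_⟩
          intro h
          have h1 := hCdep _ h
          by_cases hqr : q = r
          · exact hCr (hqr ▸ h)
          · have h2 := hdep p hpr'
            rw [← hqdef] at h2
            omega
        have hpnotW' : p ∉ W' := fun h => ((hW'mem p).mp h).2.1 rfl
        have hCnotW' : ∀ w ∈ C, w ∉ W' := fun w hw h => ((hW'mem w).mp h).2.2 hw
        have hCW' : ∀ w ∈ C, ∀ x ∈ W', ¬ padj par r w x := by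
          intro w hw x hx
          rintro (⟨hwr, hpar⟩ | ⟨hxr, hpar⟩)
          · have hxp : x = p := hpar.symm.trans ((hCmem w).mp hw).2
            exact ((hW'mem x).mp hx).2.1 hxp
          · have h1 := hW'closed x hx hxr
            rw [hpar] at h1
            exact ((hW'mem w).mp h1).2.2 hw
        have hCC : ∀ w ∈ C, ∀ w' ∈ C, ¬ padj par r w w' := by
          intro w hw w' hw'
          rintro (⟨hwr, hpar⟩ | ⟨hwr', hpar⟩)
          · have : w' = p := hpar.symm.trans ((hCmem w).mp hw).2
            exact hCp (this ▸ hw')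
          · have : w = p := hpar.symm.trans ((hCmem w').mp hw').2
            exact hCp (this ▸ hw)
        have hpW'adj : ∀ x ∈ W', padj par r p x → x = q := by
          intro x hx h
          rcases h with ⟨-, hpar⟩ | ⟨hxr, hpar⟩
          · exact hpar.symm
          · exfalso
            exact ((hW'mem x).mp hx).2.2 ((hCmem x).mpr ⟨hW'sub hx, hpar⟩)
        have hCadjp : ∀ w ∈ C, padj par r w p := by
          intro w hw
          have hwr : w ≠ r := fun h => hCr (h ▸ hw)
          exact Or.inl ⟨hwr, ((hCmem w).mp hw).2⟩
        set s : Fin n → ℕ := fun i => (S' i).card with hsdef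
        have hjex : ∃ j : Fin n, (∀ i, s i ≤ s j) ∧ ((∃ i, r ∈ S' i) → r ∈ S' j) := by
          rcases hrcond' with hunc | ⟨j, hjr, hjmax⟩
          · obtain ⟨j, -, hjmax⟩ :=
              Finset.exists_max_image Finset.univ s ⟨⟨0, hn⟩, Finset.mem_univ _⟩
            exact ⟨j, fun i => hjmax i (Finset.mem_univ i),
              fun ⟨i, hri⟩ => absurd hri (hunc i)⟩
          · exact ⟨j, hjmax, fun _ => hjr⟩
        obtain ⟨j, hjmax, hjr⟩ := hjex
        have hswithin : ∀ i i', s i ≤ s i' + 1 := heq'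
        by_cases hcn : n ≤ C.card
        · -- CASE A : p stays uncolored, every class receives at least one leaf
          obtain ⟨I, hIcard, hIwithin, hImax⟩ := exists_incr s hswithin (C.card % n)
            (le_of_lt (Nat.mod_lt _ hn)) j hjmax
          have hq0pos : 1 ≤ C.card / n := (Nat.one_le_div_iff hn).mpr hcn
          have hsum : (∑ i : Fin n, (C.card / n + if i ∈ I then 1 else 0)) = C.card := by
            rw [Finset.sum_add_distrib, Finset.sum_const, Finset.sum_ite_mem,
              Finset.univ_inter, Finset.sum_const]
            simp only [Finset.card_univ, Fintype.card_fin, smul_eq_mul, mul_one]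
            rw [hIcard]
            have := Nat.div_add_mod C.card n
            omega
          obtain ⟨f, hfsub, hfdisj, hfcard, hfcov⟩ :=
            split_finset n (fun i => C.card / n + if i ∈ I then 1 else 0) C hsum
          have hfW'disj : ∀ i i', Disjoint (S' i) (f i') := fun i i' =>
            Finset.disjoint_left.mpr fun x hx hx2 => hCnotW' x (hfsub i' hx2) (hsub' i hx)
          have hcards : ∀ i : Fin n,
              (S' i ∪ f i).card = s i + (C.card / n + if i ∈ I then 1 else 0) := by
            intro i
            rw [Finset.card_union_of_disjoint (hfW'disj i i), hfcard i]
          refine ⟨fun i => S' i ∪ f i, ?_, ?_, ?_, ?_, ?_, ?_⟩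
          · intro i
            exact Finset.union_subset ((hsub' i).trans hW'sub)
              ((hfsub i).trans (Finset.filter_subset _ _))
          · intro i i' hii
            rw [Finset.disjoint_union_left, Finset.disjoint_union_right,
              Finset.disjoint_union_right]
            exact ⟨⟨hdisj' i i' hii, hfW'disj i i'⟩, ⟨(hfW'disj i' i).symm, hfdisj i i' hii⟩⟩
          · intro i x hx y hy
            rcases Finset.mem_union.mp hx with hx' | hx' <;>
              rcases Finset.mem_union.mp hy with hy' | hy'
            · exact hind' i x hx' y hy'
            · intro h
              exact hCW' y (hfsub i hy') x (hsub' i hx') (padj_symm h)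
            · exact hCW' x (hfsub i hx') y (hsub' i hy')
            · exact hCC x (hfsub i hx') y (hfsub i hy')
          · intro v hv hunc i
            have hunc' : ∀ i', v ∉ S' i' := fun i' h => hunc i' (Finset.mem_union_left _ h)
            by_cases hvW' : v ∈ W'
            · obtain ⟨x, hx1, hx2⟩ := hmax' v hvW' hunc' i
              exact ⟨x, Finset.mem_union_left _ hx1, hx2⟩
            · by_cases hvC : v ∈ C
              · exfalso
                obtain ⟨i', hi'⟩ := hfcov v hvC
                exact hunc i' (Finset.mem_union_right _ hi')
              · have hvp : v = p := by
                  by_contra hvp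
                  exact hvW' ((hW'mem v).mpr ⟨hv, hvp, hvC⟩)
                have hne : (f i).Nonempty := by
                  rw [← Finset.card_pos, hfcard i]
                  omega
                obtain ⟨x, hx⟩ := hne
                exact ⟨x, Finset.mem_union_right _ hx,
                  hvp ▸ padj_symm (hCadjp x (hfsub i hx))⟩
          · intro i i'
            rw [hcards i, hcards i']
            have := hIwithin i i'
            omega
          · by_cases hrc : ∃ i, r ∈ S' i
            · right
              refine ⟨j, Finset.mem_union_left _ (hjr hrc), ?_⟩
              intro i
              rw [hcards i, hcards j]
              have := hImax i
              omega
            · left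
              push_neg at hrc
              intro i h
              rcases Finset.mem_union.mp h with h' | h'
              · exact hrc i h'
              · exact hCr (hfsub i h')
        · -- CASE B : p gets colored with a fresh colour class α
          push_neg at hcn
          obtain ⟨I, hIcard, hIwithin, hImax⟩ :=
            exists_incr s hswithin (C.card + 1) hcn j hjmax
          have hI2 : 1 < I.card := by omega
          obtain ⟨α, hαI, hαq⟩ : ∃ α ∈ I, q ∉ S' α := by
            by_cases hqc : ∃ b, q ∈ S' b
            · obtain ⟨b, hb⟩ := hqc
              obtain ⟨α, hαI, hαb⟩ := Finset.exists_mem_ne hI2 b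
              exact ⟨α, hαI, fun h => (Finset.disjoint_left.mp (hdisj' α b hαb) h) hb⟩
            · push_neg at hqc
              obtain ⟨α, hα⟩ := Finset.card_pos.mp (show 0 < I.card by omega)
              exact ⟨α, hα, hqc α⟩
          have hsum : (∑ i : Fin n, if i ∈ I.erase α then 1 else 0) = C.card := by
            rw [Finset.sum_ite_mem, Finset.univ_inter, Finset.sum_const,
              Finset.card_erase_of_mem hαI, hIcard]
            simp only [smul_eq_mul, mul_one]
            omega
          obtain ⟨f, hfsub, hfdisj, hfcard, hfcov⟩ :=
            split_finset n (fun i => if i ∈ I.erase α then 1 else 0) C hsum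
          have hfW'disj : ∀ i i', Disjoint (S' i) (f i') := fun i i' =>
            Finset.disjoint_left.mpr fun x hx hx2 => hCnotW' x (hfsub i' hx2) (hsub' i hx)
          have hfα : f α = ∅ := by
            rw [← Finset.card_eq_zero, hfcard]
            simp
          set Snew : Fin n → Finset V :=
            fun i => if i = α then insert p (S' i) else S' i ∪ f i with hSnew
          have hS'sub : ∀ i, S' i ⊆ Snew i := by
            intro i
            simp only [hSnew]
            by_cases h : i = α
            · rw [if_pos h]
              exact Finset.subset_insert _ _
            · rw [if_neg h]
              exact Finset.subset_union_left
          have hmemSnew : ∀ i x, x ∈ Snew i ↔ (i = α ∧ x = p) ∨ x ∈ S' i ∨ x ∈ f i := by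
            intro i x
            by_cases h : i = α
            · subst h
              simp [hSnew, hfα]
            · simp [hSnew, h]
          have hcards : ∀ i, (Snew i).card = s i + (if i ∈ I then 1 else 0) := by
            intro i
            simp only [hSnew]
            by_cases h : i = α
            · rw [if_pos h, Finset.card_insert_of_notMem (fun hh => hpnotW' (hsub' i hh))]
              rw [h, if_pos hαI]
            · rw [if_neg h, Finset.card_union_of_disjoint (hfW'disj i i), hfcard i]
              have he : i ∈ I.erase α ↔ i ∈ I := by simp [Finset.mem_erase, h]
              simp [he, hsdef]
          refine ⟨Snew, ?_, ?_, ?_, ?_, ?_, ?_⟩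
          · intro i x hx
            rcases (hmemSnew i x).mp hx with ⟨h1, h2⟩ | hx1 | hx1
            · exact h2 ▸ hpW
            · exact hW'sub (hsub' i hx1)
            · exact (Finset.filter_subset _ _) (hfsub i hx1)
          · intro i i' hii
            rw [Finset.disjoint_left]
            intro x hx hx'
            rcases (hmemSnew i x).mp hx with ⟨h1, h2⟩ | hx1 | hx1 <;>
              rcases (hmemSnew i' x).mp hx' with ⟨h1', h2'⟩ | hx1' | hx1'
            · exact hii (h1.trans h1'.symm)
            · exact hpnotW' (hsub' i' (h2 ▸ hx1'))
            · exact hCp (hfsub i' (h2 ▸ hx1'))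
            · exact hpnotW' (hsub' i (h2' ▸ hx1))
            · exact Finset.disjoint_left.mp (hdisj' i i' hii) hx1 hx1'
            · exact hCnotW' x (hfsub i' hx1') (hsub' i hx1)
            · exact hCp (hfsub i (h2' ▸ hx1))
            · exact hCnotW' x (hfsub i hx1) (hsub' i' hx1')
            · exact Finset.disjoint_left.mp (hfdisj i i' hii) hx1 hx1'
          · intro i x hx y hy
            rcases (hmemSnew i x).mp hx with ⟨h1, h2⟩ | hx1 | hx1 <;>
              rcases (hmemSnew i y).mp hy with ⟨h1', h2'⟩ | hy1 | hy1
            · rw [h2, h2']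
              exact hpadj_irrefl p
            · intro h
              rw [h2] at h
              exact hαq ((hpW'adj y (hsub' i hy1) h) ▸ (h1 ▸ hy1))
            · rw [h1, hfα] at hy1
              exact absurd hy1 (Finset.notMem_empty y)
            · intro h
              rw [h2'] at h
              exact hαq ((hpW'adj x (hsub' i hx1) (padj_symm h)) ▸ (h1' ▸ hx1))
            · exact hind' i x hx1 y hy1
            · intro h
              exact hCW' y (hfsub i hy1) x (hsub' i hx1) (padj_symm h)
            · rw [h1', hfα] at hx1
              exact absurd hx1 (Finset.notMem_empty x)
            · exact hCW' x (hfsub i hx1) y (hsub' i hy1)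
            · exact hCC x (hfsub i hx1) y (hfsub i hy1)
          · intro v hv hunc i
            have hunc' : ∀ i', v ∉ S' i' := fun i' h => hunc i' (hS'sub i' h)
            by_cases hvW' : v ∈ W'
            · obtain ⟨x, hx1, hx2⟩ := hmax' v hvW' hunc' i
              exact ⟨x, hS'sub i hx1, hx2⟩
            · exfalso
              by_cases hvC : v ∈ C
              · obtain ⟨i', hi'⟩ := hfcov v hvC
                exact hunc i' ((hmemSnew i' v).mpr (Or.inr (Or.inr hi')))
              · have hvp : v = p := by
                  by_contra hvp
                  exact hvW' ((hW'mem v).mpr ⟨hv, hvp, hvC⟩)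
                exact hunc α ((hmemSnew α v).mpr (Or.inl ⟨rfl, hvp⟩))
          · intro i i'
            rw [hcards i, hcards i']
            have := hIwithin i i'
            omega
          · by_cases hrc : ∃ i, r ∈ S' i
            · right
              refine ⟨j, hS'sub j (hjr hrc), ?_⟩
              intro i
              rw [hcards i, hcards j]
              have := hImax i
              omega
            · left
              push_neg at hrc
              intro i h
              rcases (hmemSnew i r).mp h with ⟨h1, h2⟩ | h' | h'
              · exact hpr' h2.symm
              · exact hrc i h'
              · exact hCr (hfsub i h')




open SimpleGraph in
lemma concat_isPath {V : Type*} {G : SimpleGraph V} {u v w : V} {p : G.Walk u v}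
    (hp : p.IsPath) (h : G.Adj v w) (hw : w ∉ p.support) : (p.concat h).IsPath := by
  rw [SimpleGraph.Walk.isPath_def, SimpleGraph.Walk.support_concat]
  refine List.Nodup.append hp.support_nodup (List.nodup_singleton w) ?_
  intro x hx hxw
  simp only [List.mem_singleton] at hxw
  exact hw (hxw ▸ hx)

open SimpleGraph in
lemma support_dist_add {V : Type*} {G : SimpleGraph V} [DecidableEq V] {a b x : V}
    (hc : G.Connected) (p : G.Walk a b)
    (hp : p.length = G.dist a b) (hx : x ∈ p.support) :
    G.dist a x + G.dist x b = G.dist a b := by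
  have h1 : G.dist a x ≤ (p.takeUntil x hx).length := SimpleGraph.dist_le _
  have h2 : G.dist x b ≤ (p.dropUntil x hx).length := SimpleGraph.dist_le _
  have h3 : (p.takeUntil x hx).length + (p.dropUntil x hx).length = p.length := by
    have := congrArg SimpleGraph.Walk.length (p.take_spec hx)
    rwa [SimpleGraph.Walk.length_append] at this
  have h4 := hc.dist_triangle (u := a) (v := x) (w := b)
  omega

open SimpleGraph in
lemma adj_dist_ne {V : Type*} {G : SimpleGraph V} [DecidableEq V] (hT : G.IsTree)
    (r x y : V) (hadj : G.Adj x y) : G.dist r x ≠ G.dist r y := by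
  intro heq
  have hc := hT.isConnected
  obtain ⟨px, hpx⟩ := hc.exists_walk_length_eq_dist r x
  obtain ⟨py, hpy⟩ := hc.exists_walk_length_eq_dist r y
  have hxy : x ≠ y := hadj.ne
  have hynot : y ∉ px.support := by
    intro hy
    have h5 := support_dist_add hc px hpx hy
    have h0 : G.dist y x = 0 := by omega
    exact hxy (((hc.preconnected y x).dist_eq_zero_iff.mp h0).symm)
  have hP2path : (px.concat hadj).IsPath :=
    concat_isPath (px.isPath_of_length_eq_dist hpx) hadj hynot
  have hP1path : py.IsPath := py.isPath_of_length_eq_dist hpy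
  have heqp := (hT.existsUnique_path r y).unique hP2path hP1path
  have hlen := congrArg SimpleGraph.Walk.length heqp
  rw [SimpleGraph.Walk.length_concat, hpx, hpy] at hlen
  omega

open SimpleGraph in
lemma parent_unique {V : Type*} {G : SimpleGraph V} [DecidableEq V] (hT : G.IsTree)
    (r x w y : V) (haw : G.Adj x w) (hay : G.Adj x y)
    (hw : G.dist r w + 1 = G.dist r x) (hy : G.dist r y + 1 = G.dist r x) : w = y := by
  by_contra hne
  have hc := hT.isConnected
  obtain ⟨pw, hpw⟩ := hc.exists_walk_length_eq_dist r w
  obtain ⟨py, hpy⟩ := hc.exists_walk_length_eq_dist r y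
  have hxw : x ∉ pw.support := by
    intro hx
    have := support_dist_add hc pw hpw hx
    omega
  have hxy' : x ∉ py.support := by
    intro hx
    have := support_dist_add hc py hpy hx
    omega
  have hPw : (pw.concat haw.symm).IsPath :=
    concat_isPath (pw.isPath_of_length_eq_dist hpw) haw.symm hxw
  have hPy : (py.concat hay.symm).IsPath :=
    concat_isPath (py.isPath_of_length_eq_dist hpy) hay.symm hxy'
  have heqp := (hT.existsUnique_path r x).unique hPw hPy
  have hw1 : w ∈ (pw.concat haw.symm).support := by
    rw [SimpleGraph.Walk.support_concat]
    exact List.mem_append_left _ pw.end_mem_support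
  have hw2 : w ∉ (py.concat hay.symm).support := by
    rw [SimpleGraph.Walk.support_concat]
    intro hmem
    rcases List.mem_append.mp hmem with hmem | hmem
    · have := support_dist_add hc py hpy hmem
      have h0 : G.dist w y = 0 := by omega
      exact hne ((hc.preconnected w y).dist_eq_zero_iff.mp h0)
    · simp only [List.mem_singleton] at hmem
      subst hmem
      omega
  rw [heqp] at hw1
  exact hw2 hw1

open SimpleGraph in
lemma parent_exists {V : Type*} {G : SimpleGraph V} [DecidableEq V] (hT : G.IsTree)
    (r v : V) (hv : v ≠ r) : ∃ w, G.Adj v w ∧ G.dist r w + 1 = G.dist r v := by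
  have hc := hT.isConnected
  have hd0 : G.dist r v ≠ 0 := fun h => hv ((hc.preconnected r v).dist_eq_zero_iff.mp h).symm
  obtain ⟨p0, hp0⟩ := hc.exists_walk_length_eq_dist v r
  obtain ⟨w, hadj, q, hq⟩ := SimpleGraph.Walk.exists_eq_cons_of_ne hv p0
  refine ⟨w, hadj, ?_⟩
  have hlq : q.length + 1 = G.dist v r := by
    rw [hq] at hp0
    simpa [SimpleGraph.Walk.length_cons] using hp0
  have h1 : G.dist w r ≤ q.length := SimpleGraph.dist_le q
  have hwv : G.dist w v = 1 := SimpleGraph.dist_eq_one_iff_adj.mpr hadj.symm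
  have h2 : G.dist r v ≤ G.dist r w + G.dist w v := hc.dist_triangle
  have h3 : G.dist r w = G.dist w r := SimpleGraph.dist_comm
  have h4 : G.dist r v = G.dist v r := SimpleGraph.dist_comm
  omega


end Stmt19


open Stmt19 in
/-- every finite tree with a distinguished root r admits a maximal equitable
n-coloring in which r is either uncolored or receives a color class of maximum size. -/
theorem stmt_19 {V : Type*} [Fintype V] [DecidableEq V] (G : SimpleGraph V)
    (hT : G.IsTree) (r : V) (n : ℕ) (hn : 0 < n) :
    ∃ S : Fin n → Finset V,
      (∀ i j : Fin n, i ≠ j → Disjoint (S i) (S j)) ∧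
      (∀ i : Fin n, ∀ x ∈ S i, ∀ y ∈ S i, ¬ G.Adj x y) ∧
      (∀ v : V, (∀ i : Fin n, v ∉ S i) → ∀ i : Fin n, ∃ x ∈ S i, G.Adj v x) ∧
      (∀ i j : Fin n, (S i).card ≤ (S j).card + 1) ∧
      ((∀ i : Fin n, r ∉ S i) ∨
        ∃ i : Fin n, r ∈ S i ∧ ∀ j : Fin n, (S j).card ≤ (S i).card) := by
  classical
  have hex : ∀ v : V, ∃ w, (v = r → w = r) ∧
      (v ≠ r → G.Adj v w ∧ G.dist r w + 1 = G.dist r v) := by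
    intro v
    by_cases h : v = r
    · exact ⟨r, fun _ => rfl, fun h' => absurd h h'⟩
    · obtain ⟨w, h1, h2⟩ := Stmt19.parent_exists hT r v h
      exact ⟨w, fun h' => absurd h' h, fun _ => ⟨h1, h2⟩⟩
  choose par hpar1 hpar2 using hex
  have hpr : par r = r := hpar1 r rfl
  have hr0 : G.dist r r = 0 := SimpleGraph.dist_self
  have hdep : ∀ v, v ≠ r → G.dist r (par v) + 1 = G.dist r v := fun v hv => (hpar2 v hv).2
  have hzero : ∀ v, G.dist r v = 0 → v = r := fun v h =>
    ((hT.isConnected.preconnected r v).dist_eq_zero_iff.mp h).symm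
  have hfrom : ∀ x y, padj par r x y → G.Adj x y := by
    rintro x y (⟨hx, hp⟩ | ⟨hy, hp⟩)
    · exact hp ▸ (hpar2 x hx).1
    · exact (hp ▸ (hpar2 y hy).1).symm
  have hto : ∀ x y, G.Adj x y → padj par r x y := by
    intro x y hadj
    have hne := Stmt19.adj_dist_ne hT r x y hadj
    have e1 : G.dist y x = 1 := SimpleGraph.dist_eq_one_iff_adj.mpr hadj.symm
    have e2 : G.dist x y = 1 := SimpleGraph.dist_eq_one_iff_adj.mpr hadj
    have h1 : G.dist r x ≤ G.dist r y + G.dist y x := hT.isConnected.dist_triangle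
    have h2 : G.dist r y ≤ G.dist r x + G.dist x y := hT.isConnected.dist_triangle
    rcases Nat.lt_or_ge (G.dist r x) (G.dist r y) with h | h
    · right
      have hyr : y ≠ r := by
        intro h'
        subst h'
        rw [hr0] at h
        omega
      exact ⟨hyr, Stmt19.parent_unique hT r y (par y) x (hpar2 y hyr).1 hadj.symm
        (hpar2 y hyr).2 (by omega)⟩
    · left
      have hxr : x ≠ r := by
        intro h'
        subst h'
        rw [hr0] at h
        omega
      exact ⟨hxr, Stmt19.parent_unique hT r x (par x) y (hpar2 x hxr).1 hadj
        (hpar2 x hxr).2 (by omega)⟩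
  obtain ⟨S, hsub, hdisj, hind, hmax, heq, hrc⟩ :=
    Stmt19.core par (G.dist r) r hpr hr0 hdep hzero n hn (Fintype.card V) Finset.univ
      (le_of_eq Finset.card_univ) (Finset.mem_univ r) (fun v _ _ => Finset.mem_univ _)
  refine ⟨S, hdisj, ?_, ?_, heq, hrc⟩
  · intro i x hx y hy hadj
    exact hind i x hx y hy (hto x y hadj)
  · intro v hv i
    obtain ⟨x, hx1, hx2⟩ := hmax v (Finset.mem_univ v) hv i
    exact ⟨x, hx1, hfrom v x hx2⟩
end
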